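/- arXiv:2304.12843 — 3 statements merged into one kernel-verified Lean document; each statement's English description precedes it below -/
import Mathlib

section
/- Under the PART 3 setup, let R_{-i} ∈ ∏_{j≠i} 𝓡_j be a subprofile such that O_i(R_{-i}, 𝓡'_i) ≠ O_i(R_{-i}, 𝓡_i). If there exist an agent j ≠ i and a preference R̂_j ∈ 𝓡_j with O_i((R̂_j, R_{-{i,j}}), 𝓡'_i) = {x, z}, then for every preference R'_j ∈ 𝓡_j, O_i((R'_j, R_{-{i,j}}), 𝓡'_i) = r(f') and O_i((R'_j, R_{-{i,j}}), 𝓡_i) = r(f). -/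
/-- A preference is represented by its strict relation `P`, where `P a b` means
`a` is strictly preferred to `b`. -/
abbrev Pref (X : Type*) := X → X → Prop

/-- The universal domain: all strict linear orders (strict total orders) on `X`. -/
def univDomain (X : Type*) : Set (Pref X) := {P | IsStrictTotalOrder X P}

/-- `S(𝓑)`: the set of ordered pairs of distinct alternatives that are fixed
(ranked the same way) throughout the domain `𝓑`. -/
def fixedPairs {X : Type*} (B : Set (Pref X)) : Set (X × X) :=
  {p | p.1 ≠ p.2 ∧ ∀ P ∈ B, P p.1 p.2}

/-- A preference domain is non-conditional if it consists exactly of the strict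
linear orders respecting all of its fixed pairs. -/
def NonConditional {X : Type*} (B : Set (Pref X)) : Prop :=
  B = {P | P ∈ univDomain X ∧ ∀ p ∈ fixedPairs B, P p.1 p.2}

/-- `{x, y} ∈ S⁻¹(𝓑)`: the unordered pair `{x, y}` is a free pair of `𝓑`. -/
def FreePair {X : Type*} (B : Set (Pref X)) (x y : X) : Prop :=
  x ≠ y ∧ (x, y) ∉ fixedPairs B ∧ (y, x) ∉ fixedPairs B

/-- The profile `R` lies in the product domain `∏ i, 𝓡 i`. -/
def InDomain {N X : Type*} (𝓡 : N → Set (Pref X)) (R : N → Pref X) : Prop :=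
  ∀ i, R i ∈ 𝓡 i

/-- The range `r(f)` of a social choice rule `f` over the domain `𝓡`. -/
def scrRange {N X : Type*} (𝓡 : N → Set (Pref X)) (f : (N → Pref X) → X) : Set X :=
  {x | ∃ R, InDomain 𝓡 R ∧ f R = x}

/-- Strategy-proofness of `f` on the product domain `𝓡`: no agent `i` can, at any
profile of the domain, obtain a strictly preferred outcome by misreporting. -/
def StrategyProof {N X : Type*} [DecidableEq N] (𝓡 : N → Set (Pref X))
    (f : (N → Pref X) → X) : Prop :=
  ∀ R, InDomain 𝓡 R → ∀ i, ∀ P' ∈ 𝓡 i, ¬ R i (f (Function.update R i P')) (f R)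

/-- `f` is a dictatorship of agent `i` on the domain `𝓡`: at every profile of the
domain, `f` selects an outcome weakly preferred by `i` to every element of the range. -/
def Dictatorship {N X : Type*} (𝓡 : N → Set (Pref X)) (f : (N → Pref X) → X)
    (i : N) : Prop :=
  ∀ R, InDomain 𝓡 R → ∀ x ∈ scrRange 𝓡 f, f R = x ∨ R i (f R) x

/-- `f` is non-dictatorial on the domain `𝓡`. -/
def NonDictatorial {N X : Type*} (𝓡 : N → Set (Pref X)) (f : (N → Pref X) → X) : Prop :=
  ∀ i, ¬ Dictatorship 𝓡 f i

/-- The option set `O_i(R_{-i}, 𝓑)` of agent `i` at the subprofile `R_{-i}`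
relative to the set of preferences `𝓑`. -/
def optionSet {N X : Type*} [DecidableEq N] (f : (N → Pref X) → X) (i : N)
    (R : N → Pref X) (B : Set (Pref X)) : Set X :=
  {x | ∃ P ∈ B, f (Function.update R i P) = x}


namespace S14

/-- x must come before y per fixed pairs plus the wish list; build a strict total
order in `B` ranking `u > v > w`. -/
theorem ext_mem {X : Type*} {B : Set (Pref X)} (hB : NonConditional B)
    {P0 : Pref X} (hP0 : P0 ∈ B) (u v w : X)
    (huv : u ≠ v) (hvw : v ≠ w) (huw : u ≠ w)
    (h1 : (v, u) ∉ fixedPairs B) (h2 : (w, v) ∉ fixedPairs B) (h3 : (w, u) ∉ fixedPairs B) :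
    ∃ P ∈ B, P u v ∧ P v w ∧ P u w := by
  have hstB : ∀ P ∈ B, IsStrictTotalOrder X P := by
    intro P hP; rw [hB] at hP; exact hP.1
  have hst0 := hstB P0 hP0
  set T : X → X → Prop := fun a b => (a, b) ∈ fixedPairs B with hT
  have hTirr : ∀ a, ¬ T a a := fun a h => h.1 rfl
  have hTasym : ∀ a b, T a b → ¬ T b a := by
    intro a b hab hba
    exact hst0.irrefl a (hst0.trans _ _ _ (hab.2 P0 hP0) (hba.2 P0 hP0))
  have hTtrans : ∀ a b c, T a b → T b c → T a c := by
    intro a b c hab hbc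
    refine ⟨?_, fun P hP => (hstB P hP).trans _ _ _ (hab.2 P hP) (hbc.2 P hP)⟩
    intro hac
    have hac' : a = c := hac
    have hPac := hst0.trans _ _ _ (hab.2 P0 hP0) (hbc.2 P0 hP0)
    rw [hac'] at hPac
    exact hst0.irrefl c hPac
  set e : X → X → Prop := fun a b => (a = u ∧ b = v) ∨ (a = v ∧ b = w) ∨ (a = u ∧ b = w)
    with he
  have heirr : ∀ a, ¬ e a a := by
    rintro a (⟨rfl, rfl⟩ | ⟨rfl, rfl⟩ | ⟨rfl, rfl⟩)
    exacts [huv rfl, hvw rfl, huw rfl]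
  have hetrans : ∀ a b c, e a b → e b c → e a c := by
    rintro a b c h1' h2'
    rcases h1' with ⟨rfl, rfl⟩ | ⟨rfl, rfl⟩ | ⟨rfl, rfl⟩ <;>
      rcases h2' with ⟨h, rfl⟩ | ⟨h, rfl⟩ | ⟨h, rfl⟩ <;>
      first
        | exact Or.inr (Or.inr ⟨rfl, rfl⟩)
        | exact absurd h (Ne.symm huv)
        | exact absurd h (Ne.symm hvw)
        | exact absurd h (Ne.symm huw)
  have hTev : ∀ a b c d, e a b → T b c → e c d → False := by
    rintro a b c d he1 hT2 he2
    rcases he1 with ⟨ha, rfl⟩ | ⟨ha, rfl⟩ | ⟨ha, rfl⟩ <;>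
      rcases he2 with ⟨hc, hd⟩ | ⟨hc, hd⟩ | ⟨hc, hd⟩ <;>
      rw [hc] at hT2 <;>
      first
        | exact h1 hT2
        | exact h2 hT2
        | exact h3 hT2
        | exact hTirr _ hT2
  set r : X → X → Prop := fun a b => T a b ∨ e a b with hr
  set Q : X → X → Prop := fun a b => T a b ∨ e a b ∨ (∃ c, T a c ∧ e c b) ∨
    (∃ c, e a c ∧ T c b) ∨ (∃ c d, T a c ∧ e c d ∧ T d b) with hQ
  have hQr : ∀ a b c, Q a b → r b c → Q a c := by
    rintro a b c (hab | hab | ⟨m, hm1, hm2⟩ | ⟨m, hm1, hm2⟩ | ⟨m, n, hm1, hm2, hm3⟩)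
      (hbc | hbc)
    · exact Or.inl (hTtrans _ _ _ hab hbc)
    · exact Or.inr (Or.inr (Or.inl ⟨b, hab, hbc⟩))
    · exact Or.inr (Or.inr (Or.inr (Or.inl ⟨b, hab, hbc⟩)))
    · exact Or.inr (Or.inl (hetrans _ _ _ hab hbc))
    · exact Or.inr (Or.inr (Or.inr (Or.inr ⟨m, b, hm1, hm2, hbc⟩)))
    · exact Or.inr (Or.inr (Or.inl ⟨m, hm1, hetrans _ _ _ hm2 hbc⟩))
    · exact Or.inr (Or.inr (Or.inr (Or.inl ⟨m, hm1, hTtrans _ _ _ hm2 hbc⟩)))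
    · exact absurd hbc (fun hbc => hTev _ _ _ _ hm1 hm2 hbc)
    · exact Or.inr (Or.inr (Or.inr (Or.inr ⟨m, n, hm1, hm2, hTtrans _ _ _ hm3 hbc⟩)))
    · exact absurd hbc (fun hbc => hTev _ _ _ _ hm2 hm3 hbc)
  have hQirr : ∀ a, ¬ Q a a := by
    rintro a (h | h | ⟨m, hm1, hm2⟩ | ⟨m, hm1, hm2⟩ | ⟨m, n, hm1, hm2, hm3⟩)
    · exact hTirr _ h
    · exact heirr _ h
    · exact hTev _ _ _ _ hm2 hm1 hm2
    · exact hTev _ _ _ _ hm1 hm2 hm1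
    · exact hTev _ _ _ _ hm2 (hTtrans _ _ _ hm3 hm1) hm2
  have htg : ∀ a b, Relation.TransGen r a b → Q a b := by
    intro a b h
    induction h with
    | single h => rcases h with h | h; exacts [Or.inl h, Or.inr (Or.inl h)]
    | tail _ h ih => exact hQr _ _ _ ih h
  set po : X → X → Prop := fun a b => a = b ∨ Relation.TransGen r a b with hpo
  haveI hrefl : IsRefl X po := ⟨fun a => Or.inl rfl⟩
  haveI htrans : IsTrans X po := by
    constructor
    rintro a b c (rfl | hab) (rfl | hbc)
    · exact Or.inl rfl
    · exact Or.inr hbc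
    · exact Or.inr hab
    · exact Or.inr (hab.trans hbc)
  haveI hpre : IsPreorder X po := ⟨⟩
  haveI hanti : IsAntisymm X po := by
    constructor
    rintro a b (rfl | hab) (h | hba)
    · rfl
    · rfl
    · exact h.symm
    · exact absurd (htg _ _ (hab.trans hba)) (hQirr a)
  haveI hpo' : IsPartialOrder X po := ⟨⟩
  obtain ⟨s, hlin, hrs⟩ := extend_partialOrder po
  haveI := hlin
  refine ⟨fun a b => s a b ∧ a ≠ b, ?_, ?_, ?_, ?_⟩
  · rw [hB]
    refine ⟨?_, ?_⟩
    · refine { trichotomous := ?_, irrefl := fun a h => h.2 rfl, trans := ?_ }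
      · intro a b h1 h2
        by_contra hab
        · rcases hlin.toTotal.total a b with h | h
          · exact h1 ⟨h, hab⟩
          · exact h2 ⟨h, fun hh => hab hh.symm⟩
      · rintro a b c ⟨hab, hab'⟩ ⟨hbc, hbc'⟩
        refine ⟨hlin.toIsPartialOrder.toIsPreorder.toIsTrans.trans _ _ _ hab hbc, ?_⟩
        intro hac
        have hac' : a = c := hac
        rw [hac'] at hab
        exact hbc' (hlin.toIsPartialOrder.toAntisymm.antisymm _ _ hbc hab)
    · intro p hp
      exact ⟨hrs _ _ (Or.inr (Relation.TransGen.single (Or.inl hp))), hp.1⟩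
  · exact ⟨hrs _ _ (Or.inr (Relation.TransGen.single (Or.inr (Or.inl ⟨rfl, rfl⟩)))), huv⟩
  · exact ⟨hrs _ _ (Or.inr (Relation.TransGen.single (Or.inr (Or.inr (Or.inl ⟨rfl, rfl⟩))))), hvw⟩
  · exact ⟨hrs _ _ (Or.inr (Relation.TransGen.single (Or.inr (Or.inr (Or.inr ⟨rfl, rfl⟩))))), huw⟩


def prefT : Fin 6 → Fin 3 → Fin 3 → Bool := fun p a b =>
  match p, a, b with
  | 0, 0, 1 => true
  | 0, 0, 2 => true
  | 0, 1, 2 => true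
  | 1, 0, 1 => true
  | 1, 0, 2 => true
  | 1, 2, 1 => true
  | 2, 0, 2 => true
  | 2, 1, 0 => true
  | 2, 1, 2 => true
  | 3, 1, 0 => true
  | 3, 1, 2 => true
  | 3, 2, 0 => true
  | 4, 0, 1 => true
  | 4, 2, 0 => true
  | 4, 2, 1 => true
  | 5, 1, 0 => true
  | 5, 2, 0 => true
  | 5, 2, 1 => true
  | _, _, _ => false

def bitT : Fin 8 → Fin 3 → Bool := fun m k =>
  match m, k with
  | 1, 0 => true
  | 2, 1 => true
  | 3, 0 => true
  | 3, 1 => true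
  | 4, 2 => true
  | 5, 0 => true
  | 5, 2 => true
  | 6, 1 => true
  | 6, 2 => true
  | 7, 0 => true
  | 7, 1 => true
  | 7, 2 => true
  | _, _ => false

def mxT : Fin 6 → Fin 8 → Fin 3 := fun p m =>
  match p, m with
  | 0, 0 => 0
  | 0, 1 => 0
  | 0, 2 => 1
  | 0, 3 => 0
  | 0, 4 => 2
  | 0, 5 => 0
  | 0, 6 => 1
  | 0, 7 => 0
  | 1, 0 => 0
  | 1, 1 => 0
  | 1, 2 => 1
  | 1, 3 => 0
  | 1, 4 => 2
  | 1, 5 => 0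
  | 1, 6 => 2
  | 1, 7 => 0
  | 2, 0 => 0
  | 2, 1 => 0
  | 2, 2 => 1
  | 2, 3 => 1
  | 2, 4 => 2
  | 2, 5 => 0
  | 2, 6 => 1
  | 2, 7 => 1
  | 3, 0 => 0
  | 3, 1 => 0
  | 3, 2 => 1
  | 3, 3 => 1
  | 3, 4 => 2
  | 3, 5 => 2
  | 3, 6 => 1
  | 3, 7 => 1
  | 4, 0 => 0
  | 4, 1 => 0
  | 4, 2 => 1
  | 4, 3 => 0
  | 4, 4 => 2
  | 4, 5 => 2
  | 4, 6 => 2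
  | 4, 7 => 2
  | 5, 0 => 0
  | 5, 1 => 0
  | 5, 2 => 1
  | 5, 3 => 1
  | 5, 4 => 2
  | 5, 5 => 2
  | 5, 6 => 2
  | 5, 7 => 2

def rowOKT (σ : Bool) (pa : Fin 6) (sa : Fin 8) (pb : Fin 6) (sb : Fin 8) : Bool :=
  (List.finRange 6).all fun pi =>
    (σ && !(prefT pi 2 1)) ||
    (!(prefT pa (mxT pi sb) (mxT pi sa)) && !(prefT pb (mxT pi sa) (mxT pi sb)))
def subT (p1 p2 p3 p4 : Fin 6) : Bool :=
  (List.finRange 3).all fun a => (List.finRange 3).all fun b =>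
    !(prefT p1 a b && prefT p2 a b && prefT p3 a b) || prefT p4 a b
def s1T : Fin 2 → Fin 8 := ![3,7]
def s2T : Fin 3 → Fin 8 := ![4,5,7]
def s3T : Fin 4 → Fin 8 := ![1,4,5,3]
def s4T : Fin 5 → Fin 8 := ![1,4,5,3,7]

theorem prefT_diag : ∀ (p : Fin 6) (a : Fin 3), prefT p a a = false := by decide
theorem prefT_asymT : ∀ (p : Fin 6) (a b : Fin 3), prefT p a b = true → prefT p b a = false := by
  decide
theorem prefT_total : ∀ (p : Fin 6) (a b : Fin 3), a ≠ b → prefT p a b = false →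
    prefT p b a = true := by decide
theorem mxT_mem : ∀ (p : Fin 6) (m : Fin 8), (bitT m 0 || bitT m 1 || bitT m 2) = true →
    bitT m (mxT p m) = true := by decide
theorem mxT_max : ∀ (p : Fin 6) (m : Fin 8) (k : Fin 3), bitT m k = true →
    prefT p k (mxT p m) = false := by decide
theorem code_s1 : ∀ m : Fin 8, (!(bitT m 1) || bitT m 0) = true → bitT m 1 = true →
    ∃ v : Fin 2, s1T v = m := by decide
theorem code_s2 : ∀ m : Fin 8, (bitT m 0 || bitT m 1 || bitT m 2) = true →
    (!(bitT m 1) || bitT m 0) = true → bitT m 2 = true → ∃ v : Fin 3, s2T v = m := by decide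
theorem code_s3 : ∀ m : Fin 8, (bitT m 0 || bitT m 1 || bitT m 2) = true →
    (!(bitT m 1) || bitT m 0) = true → ¬(bitT m 0 = true ∧ bitT m 1 = true ∧ bitT m 2 = true) →
    ∃ v : Fin 4, s3T v = m := by decide
theorem code_s4 : ∀ m : Fin 8, (bitT m 0 || bitT m 1 || bitT m 2) = true →
    (!(bitT m 1) || bitT m 0) = true → ∃ v : Fin 5, s4T v = m := by decide

def embF {X : Type*} (x y z : X) : Fin 3 → X := ![x, y, z]

@[simp] theorem embF0 {X : Type*} (x y z : X) : embF x y z 0 = x := rfl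
@[simp] theorem embF1 {X : Type*} (x y z : X) : embF x y z 1 = y := rfl
@[simp] theorem embF2 {X : Type*} (x y z : X) : embF x y z 2 = z := rfl

theorem mask_exists (A B C : Prop) : ∃ m : Fin 8,
    (bitT m 0 = true ↔ A) ∧ (bitT m 1 = true ↔ B) ∧ (bitT m 2 = true ↔ C) := by
  by_cases hA : A <;> by_cases hB : B <;> by_cases hC : C
  · exact ⟨7, iff_of_true rfl hA, iff_of_true rfl hB, iff_of_true rfl hC⟩
  · exact ⟨3, iff_of_true rfl hA, iff_of_true rfl hB, iff_of_false (by decide) hC⟩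
  · exact ⟨5, iff_of_true rfl hA, iff_of_false (by decide) hB, iff_of_true rfl hC⟩
  · exact ⟨1, iff_of_true rfl hA, iff_of_false (by decide) hB, iff_of_false (by decide) hC⟩
  · exact ⟨6, iff_of_false (by decide) hA, iff_of_true rfl hB, iff_of_true rfl hC⟩
  · exact ⟨2, iff_of_false (by decide) hA, iff_of_true rfl hB, iff_of_false (by decide) hC⟩
  · exact ⟨4, iff_of_false (by decide) hA, iff_of_false (by decide) hB, iff_of_true rfl hC⟩
  · exact ⟨0, iff_of_false (by decide) hA, iff_of_false (by decide) hB,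
      iff_of_false (by decide) hC⟩

section CodeIff

variable {X : Type*} {P : X → X → Prop}

theorem st_asym (hst : IsStrictTotalOrder X P) {a b : X} (h : P a b) : ¬ P b a :=
  fun h' => hst.irrefl a (hst.trans _ _ _ h h')

theorem st_neg (hst : IsStrictTotalOrder X P) {a b : X} (hab : a ≠ b) (h : ¬ P a b) : P b a := by
  rcases @trichotomous_of _ P hst.toTrichotomous a b with h' | h' | h'
  · exact absurd h' h
  · exact absurd h' hab
  · exact h'

theorem code_iff (hst : IsStrictTotalOrder X P) {x y z : X} (hxy : x ≠ y) (hxz : x ≠ z) (hyz : y ≠ z) (p : Fin 6)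
    (h01 : prefT p 0 1 = true ↔ P x y) (h02 : prefT p 0 2 = true ↔ P x z)
    (h12 : prefT p 1 2 = true ↔ P y z) :
    ∀ a b : Fin 3, prefT p a b = true ↔ P (embF x y z a) (embF x y z b) := by
  have hrev : ∀ (a b : Fin 3) (u v : X), u ≠ v → (prefT p a b = true ↔ P u v) → a ≠ b →
      (prefT p b a = true ↔ P v u) := by
    intro a b u v huv hiff hab
    constructor
    · intro h
      refine st_neg hst huv fun h' => ?_
      rw [prefT_asymT p b a h] at hiff
      exact absurd (hiff.mpr h') (by simp)
    · intro h
      refine prefT_total p a b hab ?_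
      by_contra h'
      rw [Bool.not_eq_false] at h'
      exact st_asym hst h (hiff.mp h')
  have hdiag : ∀ (a : Fin 3) (u : X), (prefT p a a = true ↔ P u u) := by
    intro a u
    rw [prefT_diag]
    simp only [false_iff, Bool.false_eq_true]
    exact fun h => hst.irrefl u h
  intro a b
  fin_cases a <;> fin_cases b <;> simp only [embF0, embF1, embF2]
  · exact hdiag 0 x
  · exact h01
  · exact h02
  · exact hrev 0 1 x y hxy h01 (by decide)
  · exact hdiag 1 y
  · exact h12
  · exact hrev 0 2 x z hxz h02 (by decide)
  · exact hrev 1 2 y z hyz h12 (by decide)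
  · exact hdiag 2 z

theorem tri_code (hst : IsStrictTotalOrder X P) {x y z : X} (hxy : x ≠ y) (hxz : x ≠ z) (hyz : y ≠ z) :
    ∃ p : Fin 6, ∀ a b : Fin 3, prefT p a b = true ↔ P (embF x y z a) (embF x y z b) := by
  rcases @trichotomous_of _ P hst.toTrichotomous x y with h1 | h1 | h1
  · rcases @trichotomous_of _ P hst.toTrichotomous y z with h2 | h2 | h2
    · exact ⟨0, code_iff hst hxy hxz hyz 0 (iff_of_true rfl h1)
        (iff_of_true rfl (hst.trans _ _ _ h1 h2)) (iff_of_true rfl h2)⟩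
    · exact absurd h2 hyz
    · rcases @trichotomous_of _ P hst.toTrichotomous x z with h3 | h3 | h3
      · exact ⟨1, code_iff hst hxy hxz hyz 1 (iff_of_true rfl h1) (iff_of_true rfl h3)
          (iff_of_false (by decide) (st_asym hst h2))⟩
      · exact absurd h3 hxz
      · exact ⟨4, code_iff hst hxy hxz hyz 4 (iff_of_true rfl h1)
          (iff_of_false (by decide) (st_asym hst h3))
          (iff_of_false (by decide) (st_asym hst h2))⟩
  · exact absurd h1 hxy
  · rcases @trichotomous_of _ P hst.toTrichotomous x z with h3 | h3 | h3
    · exact ⟨2, code_iff hst hxy hxz hyz 2 (iff_of_false (by decide) (st_asym hst h1))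
        (iff_of_true rfl h3) (iff_of_true rfl (hst.trans _ _ _ h1 h3))⟩
    · exact absurd h3 hxz
    · rcases @trichotomous_of _ P hst.toTrichotomous y z with h2 | h2 | h2
      · exact ⟨3, code_iff hst hxy hxz hyz 3 (iff_of_false (by decide) (st_asym hst h1))
          (iff_of_false (by decide) (st_asym hst h3)) (iff_of_true rfl h2)⟩
      · exact absurd h2 hyz
      · exact ⟨5, code_iff hst hxy hxz hyz 5 (iff_of_false (by decide) (st_asym hst h1))
          (iff_of_false (by decide) (st_asym hst h3))
          (iff_of_false (by decide) (st_asym hst h2))⟩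

theorem realizeT {X : Type*} {B : Set (Pref X)} (hB : NonConditional B)
    {P0 : Pref X} (hP0 : P0 ∈ B) {x y z : X}
    (hxy : x ≠ y) (hxz : x ≠ z) (hyz : y ≠ z) (p : Fin 6)
    (hcompat : ∀ a b : Fin 3, prefT p a b = true →
      (embF x y z b, embF x y z a) ∉ fixedPairs B) :
    ∃ P ∈ B, ∀ a b : Fin 3, prefT p a b = true ↔ P (embF x y z a) (embF x y z b) := by
  have hstB : ∀ P ∈ B, IsStrictTotalOrder X P := by
    intro P hP; rw [hB] at hP; exact hP.1
  fin_cases p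
  · obtain ⟨P, hP, h1, h2, h3⟩ := ext_mem hB hP0 x y z hxy hyz hxz
      (hcompat 0 1 (by decide)) (hcompat 1 2 (by decide)) (hcompat 0 2 (by decide))
    exact ⟨P, hP, code_iff (hstB P hP) hxy hxz hyz 0 (iff_of_true (by decide) h1)
      (iff_of_true (by decide) h3) (iff_of_true (by decide) h2)⟩
  · obtain ⟨P, hP, h1, h2, h3⟩ := ext_mem hB hP0 x z y hxz (Ne.symm hyz) hxy
      (hcompat 0 2 (by decide)) (hcompat 2 1 (by decide)) (hcompat 0 1 (by decide))
    exact ⟨P, hP, code_iff (hstB P hP) hxy hxz hyz 1 (iff_of_true (by decide) h3)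
      (iff_of_true (by decide) h1)
      (iff_of_false (by decide) (st_asym (hstB P hP) h2))⟩
  · obtain ⟨P, hP, h1, h2, h3⟩ := ext_mem hB hP0 y x z (Ne.symm hxy) hxz hyz
      (hcompat 1 0 (by decide)) (hcompat 0 2 (by decide)) (hcompat 1 2 (by decide))
    exact ⟨P, hP, code_iff (hstB P hP) hxy hxz hyz 2
      (iff_of_false (by decide) (st_asym (hstB P hP) h1))
      (iff_of_true (by decide) h2) (iff_of_true (by decide) h3)⟩
  · obtain ⟨P, hP, h1, h2, h3⟩ := ext_mem hB hP0 y z x hyz (Ne.symm hxz) (Ne.symm hxy)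
      (hcompat 1 2 (by decide)) (hcompat 2 0 (by decide)) (hcompat 1 0 (by decide))
    exact ⟨P, hP, code_iff (hstB P hP) hxy hxz hyz 3
      (iff_of_false (by decide) (st_asym (hstB P hP) h3))
      (iff_of_false (by decide) (st_asym (hstB P hP) h2)) (iff_of_true (by decide) h1)⟩
  · obtain ⟨P, hP, h1, h2, h3⟩ := ext_mem hB hP0 z x y (Ne.symm hxz) hxy (Ne.symm hyz)
      (hcompat 2 0 (by decide)) (hcompat 0 1 (by decide)) (hcompat 2 1 (by decide))
    exact ⟨P, hP, code_iff (hstB P hP) hxy hxz hyz 4 (iff_of_true (by decide) h2)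
      (iff_of_false (by decide) (st_asym (hstB P hP) h1))
      (iff_of_false (by decide) (st_asym (hstB P hP) h3))⟩
  · obtain ⟨P, hP, h1, h2, h3⟩ := ext_mem hB hP0 z y x (Ne.symm hyz) (Ne.symm hxy) (Ne.symm hxz)
      (hcompat 2 1 (by decide)) (hcompat 1 0 (by decide)) (hcompat 2 0 (by decide))
    exact ⟨P, hP, code_iff (hstB P hP) hxy hxz hyz 5
      (iff_of_false (by decide) (st_asym (hstB P hP) h2))
      (iff_of_false (by decide) (st_asym (hstB P hP) h3))
      (iff_of_false (by decide) (st_asym (hstB P hP) h1))⟩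

end CodeIff


set_option maxHeartbeats 8000000 in
set_option synthInstance.maxHeartbeats 1000000 in
theorem coreT : ∀ σ : Bool, ∀ p1 p2 p3 : Fin 6, ∀ v1 : Fin 2, ∀ v2 : Fin 3, ∀ v3 : Fin 4,
  ((!σ) || !(bitT (s1T v1) 2)) = true →
  ((!σ) || !(bitT (s2T v2) 1)) = true →
  rowOKT σ p1 (s1T v1) p2 (s2T v2) = true →
  rowOKT σ p1 (s1T v1) p3 (s3T v3) = true →
  rowOKT σ p2 (s2T v2) p3 (s3T v3) = true →
  ∃ p4 : Fin 6, subT p1 p2 p3 p4 = true ∧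
    ∀ v4 : Fin 5, ((!σ) || !(bitT (s4T v4) 1) || !(bitT (s4T v4) 2)) = true →
      ¬(rowOKT σ p4 (s4T v4) p1 (s1T v1) = true ∧ rowOKT σ p4 (s4T v4) p2 (s2T v2) = true ∧
        rowOKT σ p4 (s4T v4) p3 (s3T v3) = true) := by
  decide

end S14



theorem statement14 {N X : Type*} [Fintype N] [Nonempty N] [Fintype X] [DecidableEq N]
    (i : N) (𝓡 𝓡' : N → Set (Pref X))
    (hAgree : ∀ j, j ≠ i → 𝓡' j = 𝓡 j)
    (hNC : ∀ j, NonConditional (𝓡 j)) (hNC' : NonConditional (𝓡' i))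
    (hss : 𝓡' i ⊂ 𝓡 i) (x y : X)
    (hxy : (x, y) ∈ fixedPairs (𝓡' i))
    (hS : fixedPairs (𝓡 i) = fixedPairs (𝓡' i) \ {(x, y)})
    (hnoz : ¬ ∃ z, (x, z) ∈ fixedPairs (𝓡' i) ∧ (z, y) ∈ fixedPairs (𝓡' i))
    (f : (N → Pref X) → X) (hSP : StrategyProof 𝓡 f)
    (z : X) (hzx : z ≠ x) (hzy : z ≠ y)
    (hrange' : scrRange 𝓡' f = {x, z})
    (hrange : scrRange 𝓡 f = {x, y, z}) :
    ∀ R : N → Pref X, (∀ j, j ≠ i → R j ∈ 𝓡 j) →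
      optionSet f i R (𝓡' i) ≠ optionSet f i R (𝓡 i) →
      ∀ j, j ≠ i → ∀ Rhat ∈ 𝓡 j,
        optionSet f i (Function.update R j Rhat) (𝓡' i) = {x, z} →
        ∀ R'j ∈ 𝓡 j,
          optionSet f i (Function.update R j R'j) (𝓡' i) = scrRange 𝓡' f ∧
          optionSet f i (Function.update R j R'j) (𝓡 i) = scrRange 𝓡 f := by
  intro R hR hO j hjne Rhat hRhatm hhat R'j hR'jm
  classical
  have hxny : x ≠ y := hxy.1
  have hxnz : x ≠ z := Ne.symm hzx
  have hynz : y ≠ z := Ne.symm hzy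
  have hsub' : 𝓡' i ⊆ 𝓡 i := hss.subset
  -- strictness of members
  have hstR : ∀ (k : N) (P : Pref X), P ∈ 𝓡 k → IsStrictTotalOrder X P := by
    intro k P hP
    have h := hNC k
    rw [h] at hP
    exact hP.1
  -- a member of 𝓡' i
  have hxr' : x ∈ scrRange 𝓡' f := by rw [hrange']; exact Set.mem_insert _ _
  obtain ⟨R0', hR0', -⟩ := hxr'
  have hP0' : R0' i ∈ 𝓡' i := hR0' i
  have hP0i : R0' i ∈ 𝓡 i := hsub' hP0'
  -- columns stay in the domain
  have hok : ∀ Ra, Ra ∈ 𝓡 j → ∀ k, k ≠ i → Function.update R j Ra k ∈ 𝓡 k := by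
    intro Ra hRa k hk
    by_cases hkj : k = j
    · subst hkj; rw [Function.update_self]; exact hRa
    · rw [Function.update_of_ne hkj]; exact hR k hk
  have hdomupd : ∀ (Q : N → Pref X), (∀ k, k ≠ i → Q k ∈ 𝓡 k) → ∀ P, P ∈ 𝓡 i →
      InDomain 𝓡 (Function.update Q i P) := by
    intro Q hQ P hP k
    by_cases hk : k = i
    · subst hk; rw [Function.update_self]; exact hP
    · rw [Function.update_of_ne hk]; exact hQ k hk
  have hdomupd' : ∀ (Q : N → Pref X), (∀ k, k ≠ i → Q k ∈ 𝓡 k) → ∀ P, P ∈ 𝓡' i →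
      InDomain 𝓡' (Function.update Q i P) := by
    intro Q hQ P hP k
    by_cases hk : k = i
    · subst hk; rw [Function.update_self]; exact hP
    · rw [Function.update_of_ne hk, hAgree k hk]; exact hQ k hk
  -- option set bounds
  have hOsub : ∀ (Q : N → Pref X), (∀ k, k ≠ i → Q k ∈ 𝓡 k) →
      optionSet f i Q (𝓡 i) ⊆ {x, y, z} := by
    intro Q hQ a ha
    obtain ⟨P, hP, hfa⟩ := ha
    have : a ∈ scrRange 𝓡 f := ⟨_, hdomupd Q hQ P hP, hfa⟩
    rwa [hrange] at this
  have hO'sub : ∀ (Q : N → Pref X), (∀ k, k ≠ i → Q k ∈ 𝓡 k) →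
      optionSet f i Q (𝓡' i) ⊆ {x, z} := by
    intro Q hQ a ha
    obtain ⟨P, hP, hfa⟩ := ha
    have : a ∈ scrRange 𝓡' f := ⟨_, hdomupd' Q hQ P hP, hfa⟩
    rwa [hrange'] at this
  have hO'O : ∀ (Q : N → Pref X), optionSet f i Q (𝓡' i) ⊆ optionSet f i Q (𝓡 i) := by
    rintro Q a ⟨P, hP, h⟩
    exact ⟨P, hsub' hP, h⟩
  have hO'ne : ∀ (Q : N → Pref X),
      f (Function.update Q i (R0' i)) ∈ optionSet f i Q (𝓡' i) :=
    fun Q => ⟨R0' i, hP0', rfl⟩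
  -- the maximizer lemma coming from strategy-proofness of agent i
  have hmax : ∀ (Q : N → Pref X), (∀ k, k ≠ i → Q k ∈ 𝓡 k) → ∀ P, P ∈ 𝓡 i →
      ∀ a, a ∈ optionSet f i Q (𝓡 i) →
      a = f (Function.update Q i P) ∨ P (f (Function.update Q i P)) a := by
    intro Q hQ P hP a ha
    obtain ⟨P', hP', hfa⟩ := ha
    have h2 := hSP _ (hdomupd Q hQ P hP) i P' hP'
    rw [Function.update_idem, Function.update_self, hfa] at h2
    rcases @trichotomous_of _ P (hstR i P hP).toTrichotomous a (f (Function.update Q i P)) with h | h | h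
    · exact absurd h h2
    · exact Or.inl h
    · exact Or.inr h
  -- strategy-proofness of agent j across columns
  have hrow : ∀ Ra, Ra ∈ 𝓡 j → ∀ Rb, Rb ∈ 𝓡 j → ∀ P, P ∈ 𝓡 i →
      ¬ Ra (f (Function.update (Function.update R j Rb) i P))
        (f (Function.update (Function.update R j Ra) i P)) := by
    intro Ra hRa Rb hRb P hP
    have h2 := hSP _ (hdomupd _ (hok Ra hRa) P hP) j Rb hRb
    have e1 : Function.update (Function.update (Function.update R j Ra) i P) j Rb
        = Function.update (Function.update R j Rb) i P := by
      rw [Function.update_comm (Ne.symm hjne), Function.update_idem]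
    have e2 : (Function.update (Function.update R j Ra) i P) j = Ra := by
      rw [Function.update_of_ne hjne, Function.update_self]
    rw [e1, e2] at h2
    exact h2
  -- fixed-pair facts
  have hyx' : (y, x) ∉ fixedPairs (𝓡' i) := by
    intro h
    exact S14.st_asym (hstR i _ hP0i) (hxy.2 (R0' i) hP0') (h.2 (R0' i) hP0')
  have hxO'h : x ∈ optionSet f i (Function.update R j Rhat) (𝓡' i) := by
    rw [hhat]; exact Set.mem_insert _ _
  have hzO'h : z ∈ optionSet f i (Function.update R j Rhat) (𝓡' i) := by
    rw [hhat]; exact Set.mem_insert_of_mem _ rfl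
  have hxOh : x ∈ optionSet f i (Function.update R j Rhat) (𝓡 i) := hO'O _ hxO'h
  have hzOh : z ∈ optionSet f i (Function.update R j Rhat) (𝓡 i) := hO'O _ hzO'h
  have hxzT' : (x, z) ∉ fixedPairs (𝓡' i) := by
    intro h
    obtain ⟨Pz', hPz', hfz⟩ := hzO'h
    rcases hmax _ (hok Rhat hRhatm) Pz' (hsub' hPz') x hxOh with heq | hlt
    · rw [hfz] at heq; exact hxnz heq
    · rw [hfz] at hlt
      exact S14.st_asym (hstR i _ (hsub' hPz')) (h.2 Pz' hPz') hlt
  have hzxT' : (z, x) ∉ fixedPairs (𝓡' i) := by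
    intro h
    obtain ⟨Px', hPx', hfx⟩ := hxO'h
    rcases hmax _ (hok Rhat hRhatm) Px' (hsub' hPx') z hzOh with heq | hlt
    · rw [hfx] at heq; exact hzx heq
    · rw [hfx] at hlt
      exact S14.st_asym (hstR i _ (hsub' hPx')) (h.2 Px' hPx') hlt
  have hyzT' : (y, z) ∉ fixedPairs (𝓡' i) := by
    intro h
    exact hxzT' ⟨hxnz, fun P hP =>
      (hstR i P (hsub' hP)).trans _ _ _ (hxy.2 P hP) (h.2 P hP)⟩
  have hTisub : fixedPairs (𝓡 i) ⊆ fixedPairs (𝓡' i) := by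
    rw [hS]; exact Set.diff_subset
  have hxyTi : (x, y) ∉ fixedPairs (𝓡 i) := by
    rw [hS]; rintro ⟨-, h⟩; exact h rfl
  have hzyTi_iff : (z, y) ∈ fixedPairs (𝓡 i) ↔ (z, y) ∈ fixedPairs (𝓡' i) := by
    rw [hS]
    constructor
    · exact fun h => h.1
    · intro h
      refine ⟨h, ?_⟩
      intro hh
      exact hzx (congrArg Prod.fst hh)
  -- O' = O \ {y}
  have hO'eq : ∀ (Q : N → Pref X), (∀ k, k ≠ i → Q k ∈ 𝓡 k) →
      optionSet f i Q (𝓡' i) = optionSet f i Q (𝓡 i) \ {y} := by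
    intro Q hQ
    apply Set.Subset.antisymm
    · intro a ha
      refine ⟨hO'O Q ha, ?_⟩
      intro hay
      rw [Set.mem_singleton_iff] at hay
      subst hay
      rcases Set.mem_insert_iff.mp (hO'sub Q hQ ha) with h | h
      · exact hxny h.symm
      · rw [Set.mem_singleton_iff] at h; exact hynz h
    · rintro a ⟨haO, hay⟩
      rw [Set.mem_singleton_iff] at hay
      rcases Set.mem_insert_iff.mp (hOsub Q hQ haO) with hax | hrest
      · obtain ⟨P', hP', hP1, hP2, hP3⟩ :=
          S14.ext_mem hNC' hP0' x z y hxnz hzy hxny hzxT' hyzT' hyx'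
        have hb : f (Function.update Q i P') ∈ optionSet f i Q (𝓡' i) := ⟨P', hP', rfl⟩
        rcases hmax Q hQ P' (hsub' hP') a haO with heq | hlt
        · rw [heq]; exact hb
        · exfalso
          rw [hax] at hlt
          rcases Set.mem_insert_iff.mp (hO'sub Q hQ hb) with hfx' | hfz'
          · rw [hfx'] at hlt; exact (hstR i P' (hsub' hP')).irrefl x hlt
          · rw [Set.mem_singleton_iff] at hfz'
            rw [hfz'] at hlt
            exact S14.st_asym (hstR i P' (hsub' hP')) hP1 hlt
      · rcases Set.mem_insert_iff.mp hrest with hay2 | hz3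
        · exact absurd hay2 hay
        · rw [Set.mem_singleton_iff] at hz3
          obtain ⟨P', hP', hP1, hP2, hP3⟩ :=
            S14.ext_mem hNC' hP0' z x y hzx hxny hzy hxzT' hyx' hyzT'
          have hb : f (Function.update Q i P') ∈ optionSet f i Q (𝓡' i) := ⟨P', hP', rfl⟩
          rcases hmax Q hQ P' (hsub' hP') a haO with heq | hlt
          · rw [heq]; exact hb
          · exfalso
            rw [hz3] at hlt
            rcases Set.mem_insert_iff.mp (hO'sub Q hQ hb) with hfx' | hfz'
            · rw [hfx'] at hlt
              exact S14.st_asym (hstR i P' (hsub' hP')) hP1 hlt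
            · rw [Set.mem_singleton_iff] at hfz'
              rw [hfz'] at hlt
              exact (hstR i P' (hsub' hP')).irrefl z hlt
  -- y ∈ O implies x ∈ O
  have hyx_imp : ∀ (Q : N → Pref X), (∀ k, k ≠ i → Q k ∈ 𝓡 k) →
      y ∈ optionSet f i Q (𝓡 i) → x ∈ optionSet f i Q (𝓡 i) := by
    intro Q hQ hy
    by_contra hx
    have hb0 := hO'ne Q
    have hb0O := hO'O _ hb0
    have hb0z : f (Function.update Q i (R0' i)) = z := by
      rcases Set.mem_insert_iff.mp (hO'sub Q hQ hb0) with h | h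
      · exact absurd (h ▸ hb0O) hx
      · exact Set.mem_singleton_iff.mp h
    have hzO : z ∈ optionSet f i Q (𝓡 i) := hb0z ▸ hb0O
    obtain ⟨Py, hPy, hfy⟩ := hy
    have hyO : y ∈ optionSet f i Q (𝓡 i) := ⟨Py, hPy, hfy⟩
    have hPyyz : Py y z := by
      rcases hmax Q hQ Py hPy z hzO with heq | hlt
      · rw [hfy] at heq; exact absurd heq hzy
      · rw [hfy] at hlt; exact hlt
    have hzyTi' : (z, y) ∉ fixedPairs (𝓡 i) :=
      fun h => S14.st_asym (hstR i Py hPy) (h.2 Py hPy) hPyyz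
    have hzyT'' : (z, y) ∉ fixedPairs (𝓡' i) := fun h => hzyTi' (hzyTi_iff.mpr h)
    obtain ⟨P', hP', hP1, hP2, hP3⟩ :=
      S14.ext_mem hNC' hP0' x y z hxny hynz hxnz hyx' hzyT'' hzxT'
    have hbO' : f (Function.update Q i P') ∈ optionSet f i Q (𝓡' i) := ⟨P', hP', rfl⟩
    have hbz : f (Function.update Q i P') = z := by
      rcases Set.mem_insert_iff.mp (hO'sub Q hQ hbO') with h | h
      · exact absurd (h ▸ (hO'O _ hbO')) hx
      · exact Set.mem_singleton_iff.mp h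
    rcases hmax Q hQ P' (hsub' hP') y hyO with heq | hlt
    · rw [hbz] at heq; exact hynz heq
    · rw [hbz] at hlt
      exact S14.st_asym (hstR i P' (hsub' hP')) hP2 hlt
  -- (z,y) fixed excludes y,z together in an option set
  have hzy_excl : (z, y) ∈ fixedPairs (𝓡 i) → ∀ (Q : N → Pref X),
      (∀ k, k ≠ i → Q k ∈ 𝓡 k) → y ∈ optionSet f i Q (𝓡 i) →
      z ∈ optionSet f i Q (𝓡 i) → False := by
    intro hfix Q hQ hy hz
    obtain ⟨Py, hPy, hfy⟩ := hy
    rcases hmax Q hQ Py hPy z hz with heq | hlt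
    · rw [hfy] at heq; exact hzy heq
    · rw [hfy] at hlt
      exact S14.st_asym (hstR i Py hPy) (hfix.2 Py hPy) hlt
  -- the value of f at a coded preference is determined by the mask
  have hval : ∀ (Q : N → Pref X), (∀ k, k ≠ i → Q k ∈ 𝓡 k) → ∀ m : Fin 8,
      (∀ k : Fin 3, S14.bitT m k = true ↔ S14.embF x y z k ∈ optionSet f i Q (𝓡 i)) →
      ∀ P, P ∈ 𝓡 i → ∀ p : Fin 6,
      (∀ a b : Fin 3, S14.prefT p a b = true ↔ P (S14.embF x y z a) (S14.embF x y z b)) →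
      f (Function.update Q i P) = S14.embF x y z (S14.mxT p m) := by
    intro Q hQ m hm P hP p hcode
    have hne : (S14.bitT m 0 || S14.bitT m 1 || S14.bitT m 2) = true := by
      have h0 := hO'ne Q
      have h0O := hO'O _ h0
      rcases Set.mem_insert_iff.mp (hOsub Q hQ h0O) with h | h
      · have hb : S14.bitT m 0 = true := (hm 0).mpr (h ▸ h0O)
        rw [hb]; rfl
      · rcases Set.mem_insert_iff.mp h with h | h
        · have hb : S14.bitT m 1 = true := (hm 1).mpr (h ▸ h0O)
          rw [hb]; simp
        · rw [Set.mem_singleton_iff] at h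
          have hb : S14.bitT m 2 = true := (hm 2).mpr (h ▸ h0O)
          rw [hb]; simp
    have hmemb : S14.embF x y z (S14.mxT p m) ∈ optionSet f i Q (𝓡 i) :=
      (hm _).mp (S14.mxT_mem p m hne)
    rcases hmax Q hQ P hP _ hmemb with heq | hlt
    · exact heq.symm
    · exfalso
      have hfO : f (Function.update Q i P) ∈ optionSet f i Q (𝓡 i) := ⟨P, hP, rfl⟩
      obtain ⟨k0, hk0⟩ : ∃ k0 : Fin 3, f (Function.update Q i P) = S14.embF x y z k0 := by
        rcases Set.mem_insert_iff.mp (hOsub Q hQ hfO) with h | h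
        · exact ⟨0, h⟩
        · rcases Set.mem_insert_iff.mp h with h | h
          · exact ⟨1, h⟩
          · exact ⟨2, Set.mem_singleton_iff.mp h⟩
      have hbit : S14.bitT m k0 = true := (hm k0).mpr (hk0 ▸ hfO)
      have hpf : S14.prefT p k0 (S14.mxT p m) = true :=
        (hcode k0 (S14.mxT p m)).mpr (hk0 ▸ hlt)
      rw [S14.mxT_max p m k0 hbit] at hpf
      exact Bool.false_ne_true hpf
  -- characterize fixed pairs of agent i on the triple
  have hTichar : ∀ a b : Fin 3,
      (S14.embF x y z a, S14.embF x y z b) ∈ fixedPairs (𝓡 i) → a = 2 ∧ b = 1 := by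
    intro a b h
    fin_cases a <;> fin_cases b
    · exact absurd rfl h.1
    · exact absurd h hxyTi
    · exact absurd (hTisub h) hxzT'
    · exact absurd (hTisub h) hyx'
    · exact absurd rfl h.1
    · exact absurd (hTisub h) hyzT'
    · exact absurd (hTisub h) hzxT'
    · exact ⟨rfl, rfl⟩
    · exact absurd rfl h.1
  -- sigma flag
  obtain ⟨σb, hσiff⟩ : ∃ σb : Bool, (σb = true ↔ (z, y) ∈ fixedPairs (𝓡 i)) := by
    by_cases h : (z, y) ∈ fixedPairs (𝓡 i)
    · exact ⟨true, iff_of_true rfl h⟩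
    · exact ⟨false, iff_of_false (by simp) h⟩
  -- realize rows for agent i
  have hreali : ∀ p : Fin 6, (σb = true → S14.prefT p 2 1 = true) → ∃ P, P ∈ 𝓡 i ∧
      ∀ a b : Fin 3, S14.prefT p a b = true ↔ P (S14.embF x y z a) (S14.embF x y z b) := by
    intro p hpσ
    have hcompat : ∀ a b : Fin 3, S14.prefT p a b = true →
        (S14.embF x y z b, S14.embF x y z a) ∉ fixedPairs (𝓡 i) := by
      intro a b hab hmem
      obtain ⟨hb2, ha1⟩ := hTichar b a hmem
      subst hb2; subst ha1
      have hσt : σb = true := hσiff.mpr hmem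
      rw [S14.prefT_asymT p 2 1 (hpσ hσt)] at hab
      exact Bool.false_ne_true hab
    obtain ⟨P, hP, hc⟩ := S14.realizeT (hNC i) hP0i hxny hxnz hynz p hcompat
    exact ⟨P, hP, hc⟩
  -- codes of the three relevant preferences of agent j
  obtain ⟨p1, hcode1⟩ := S14.tri_code (hstR j _ (hR j hjne)) hxny hxnz hynz
  obtain ⟨p2, hcode2⟩ := S14.tri_code (hstR j _ hRhatm) hxny hxnz hynz
  obtain ⟨p3, hcode3⟩ := S14.tri_code (hstR j _ hR'jm) hxny hxnz hynz
  -- masks of the columns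
  have hmask : ∀ Ra : Pref X, ∃ m : Fin 8, ∀ k : Fin 3, S14.bitT m k = true ↔
      S14.embF x y z k ∈ optionSet f i (Function.update R j Ra) (𝓡 i) := by
    intro Ra
    obtain ⟨m, h0, h1, h2⟩ := S14.mask_exists
      (x ∈ optionSet f i (Function.update R j Ra) (𝓡 i))
      (y ∈ optionSet f i (Function.update R j Ra) (𝓡 i))
      (z ∈ optionSet f i (Function.update R j Ra) (𝓡 i))
    refine ⟨m, ?_⟩
    intro k
    fin_cases k
    · exact h0
    · exact h1
    · exact h2
  obtain ⟨m1, hm1⟩ := hmask (R j)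
  obtain ⟨m2, hm2⟩ := hmask Rhat
  obtain ⟨m3, hm3⟩ := hmask R'j
  -- shape facts
  have hshape : ∀ Ra, Ra ∈ 𝓡 j → ∀ m : Fin 8, (∀ k : Fin 3, S14.bitT m k = true ↔
      S14.embF x y z k ∈ optionSet f i (Function.update R j Ra) (𝓡 i)) →
      (S14.bitT m 0 || S14.bitT m 1 || S14.bitT m 2) = true ∧
      (!(S14.bitT m 1) || S14.bitT m 0) = true ∧
      (σb = true → ¬(S14.bitT m 1 = true ∧ S14.bitT m 2 = true)) := by
    intro Ra hRa m hm
    refine ⟨?_, ?_, ?_⟩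
    · have h0 := hO'ne (Function.update R j Ra)
      have h0O := hO'O _ h0
      rcases Set.mem_insert_iff.mp (hOsub _ (hok Ra hRa) h0O) with h | h
      · have hb : S14.bitT m 0 = true := (hm 0).mpr (h ▸ h0O)
        rw [hb]; rfl
      · rcases Set.mem_insert_iff.mp h with h | h
        · have hb : S14.bitT m 1 = true := (hm 1).mpr (h ▸ h0O)
          rw [hb]; simp
        · rw [Set.mem_singleton_iff] at h
          have hb : S14.bitT m 2 = true := (hm 2).mpr (h ▸ h0O)
          rw [hb]; simp
    · cases hb : S14.bitT m 1
      · simp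
      · have hx0 := hyx_imp _ (hok Ra hRa) ((hm 1).mp hb)
        have hb0 : S14.bitT m 0 = true := (hm 0).mpr hx0
        rw [hb0]; simp
    · rintro hσt ⟨hb1, hb2⟩
      exact hzy_excl (hσiff.mp hσt) _ (hok Ra hRa) ((hm 1).mp hb1) ((hm 2).mp hb2)
  -- rowOK builder
  have hrowOK : ∀ Ra, Ra ∈ 𝓡 j → ∀ Rb, Rb ∈ 𝓡 j → ∀ (pa pb : Fin 6) (ma mb : Fin 8),
      (∀ a b : Fin 3, S14.prefT pa a b = true ↔ Ra (S14.embF x y z a) (S14.embF x y z b)) →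
      (∀ a b : Fin 3, S14.prefT pb a b = true ↔ Rb (S14.embF x y z a) (S14.embF x y z b)) →
      (∀ k : Fin 3, S14.bitT ma k = true ↔
        S14.embF x y z k ∈ optionSet f i (Function.update R j Ra) (𝓡 i)) →
      (∀ k : Fin 3, S14.bitT mb k = true ↔
        S14.embF x y z k ∈ optionSet f i (Function.update R j Rb) (𝓡 i)) →
      S14.rowOKT σb pa ma pb mb = true := by
    intro Ra hRa Rb hRb pa pb ma mb hcodea hcodeb hma hmb
    rw [S14.rowOKT, List.all_eq_true]
    intro pi hpi
    by_cases hskip : (σb && !(S14.prefT pi 2 1)) = true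
    · rw [hskip]; rfl
    · have hpσ : σb = true → S14.prefT pi 2 1 = true := by
        intro hσt
        cases hpp : S14.prefT pi 2 1
        · exact absurd (by rw [hσt, hpp]; rfl) hskip
        · rfl
      obtain ⟨P, hP, hcodeP⟩ := hreali pi hpσ
      have hva := hval _ (hok Ra hRa) ma hma P hP pi hcodeP
      have hvb := hval _ (hok Rb hRb) mb hmb P hP pi hcodeP
      have hr1 := hrow Ra hRa Rb hRb P hP
      have hr2 := hrow Rb hRb Ra hRa P hP
      rw [hva, hvb] at hr1 hr2
      have hb1 : S14.prefT pa (S14.mxT pi mb) (S14.mxT pi ma) = false := by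
        cases hpp : S14.prefT pa (S14.mxT pi mb) (S14.mxT pi ma)
        · rfl
        · exact absurd ((hcodea _ _).mp hpp) hr1
      have hb2 : S14.prefT pb (S14.mxT pi ma) (S14.mxT pi mb) = false := by
        cases hpp : S14.prefT pb (S14.mxT pi ma) (S14.mxT pi mb)
        · rfl
        · exact absurd ((hcodeb _ _).mp hpp) hr2
      rw [hb1, hb2]
      simp
  -- the given facts about the hypothesis columns
  have hyO1 : y ∈ optionSet f i (Function.update R j (R j)) (𝓡 i) := by
    rw [Function.update_eq_self]
    by_contra hyn
    apply hO
    rw [hO'eq R hR, Set.diff_singleton_eq_self hyn]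
  have hb1y : S14.bitT m1 1 = true := (hm1 1).mpr hyO1
  have hb2z : S14.bitT m2 2 = true := (hm2 2).mpr hzOh
  -- main claim
  have hO3full : optionSet f i (Function.update R j R'j) (𝓡 i) = {x, y, z} := by
    by_contra hne3
    have hnall : ¬(S14.bitT m3 0 = true ∧ S14.bitT m3 1 = true ∧ S14.bitT m3 2 = true) := by
      rintro ⟨h0, h1, h2⟩
      apply hne3
      apply Set.Subset.antisymm (hOsub _ (hok R'j hR'jm))
      intro a ha
      rcases Set.mem_insert_iff.mp ha with rfl | ha
      · exact (hm3 0).mp h0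
      · rcases Set.mem_insert_iff.mp ha with rfl | ha
        · exact (hm3 1).mp h1
        · rw [Set.mem_singleton_iff] at ha
          subst ha
          exact (hm3 2).mp h2
    obtain ⟨hne1, hximp1, hσ1⟩ := hshape (R j) (hR j hjne) m1 hm1
    obtain ⟨hne2, hximp2, hσ2⟩ := hshape Rhat hRhatm m2 hm2
    obtain ⟨hne3', hximp3, hσ3⟩ := hshape R'j hR'jm m3 hm3
    obtain ⟨v1, hv1⟩ := S14.code_s1 m1 hximp1 hb1y
    obtain ⟨v2, hv2⟩ := S14.code_s2 m2 hne2 hximp2 hb2z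
    obtain ⟨v3, hv3⟩ := S14.code_s3 m3 hne3' hximp3 hnall
    have hside1 : (!σb || !(S14.bitT (S14.s1T v1) 2)) = true := by
      cases hσb : σb
      · rfl
      · have hb : S14.bitT m1 2 = false := by
          cases hb : S14.bitT m1 2
          · rfl
          · exact absurd ⟨hb1y, hb⟩ (hσ1 hσb)
        rw [hv1, hb]; rfl
    have hside2 : (!σb || !(S14.bitT (S14.s2T v2) 1)) = true := by
      cases hσb : σb
      · rfl
      · have hb : S14.bitT m2 1 = false := by
          cases hb : S14.bitT m2 1
          · rfl
          · exact absurd ⟨hb, hb2z⟩ (hσ2 hσb)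
        rw [hv2, hb]; rfl
    have hrow12 := hrowOK (R j) (hR j hjne) Rhat hRhatm p1 p2 m1 m2 hcode1 hcode2 hm1 hm2
    have hrow13 := hrowOK (R j) (hR j hjne) R'j hR'jm p1 p3 m1 m3 hcode1 hcode3 hm1 hm3
    have hrow23 := hrowOK Rhat hRhatm R'j hR'jm p2 p3 m2 m3 hcode2 hcode3 hm2 hm3
    obtain ⟨p4, hsub4, hkill⟩ := S14.coreT σb p1 p2 p3 v1 v2 v3 hside1 hside2
      (by rw [hv1, hv2]; exact hrow12) (by rw [hv1, hv3]; exact hrow13)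
      (by rw [hv2, hv3]; exact hrow23)
    have hcompat4 : ∀ a b : Fin 3, S14.prefT p4 a b = true →
        (S14.embF x y z b, S14.embF x y z a) ∉ fixedPairs (𝓡 j) := by
      intro a b hab hmem
      have h1' : S14.prefT p1 b a = true := (hcode1 b a).mpr (hmem.2 _ (hR j hjne))
      have h2' : S14.prefT p2 b a = true := (hcode2 b a).mpr (hmem.2 _ hRhatm)
      have h3' : S14.prefT p3 b a = true := (hcode3 b a).mpr (hmem.2 _ hR'jm)
      have hs := hsub4
      rw [S14.subT, List.all_eq_true] at hs
      have hs2 := hs b (by simp)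
      rw [List.all_eq_true] at hs2
      have hs3 := hs2 a (by simp)
      rw [h1', h2', h3'] at hs3
      have hp4ba : S14.prefT p4 b a = true := by
        cases hpp : S14.prefT p4 b a
        · rw [hpp] at hs3; exact absurd hs3 (by simp)
        · rfl
      rw [S14.prefT_asymT p4 b a hp4ba] at hab
      exact Bool.false_ne_true hab
    obtain ⟨R4, hR4m, hcode4⟩ :=
      S14.realizeT (hNC j) (hR j hjne) hxny hxnz hynz p4 hcompat4
    obtain ⟨m4, hm4⟩ := hmask R4
    obtain ⟨hne4, hximp4, hσ4⟩ := hshape R4 hR4m m4 hm4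
    obtain ⟨v4, hv4⟩ := S14.code_s4 m4 hne4 hximp4
    have hside4 : (!σb || !(S14.bitT (S14.s4T v4) 1) || !(S14.bitT (S14.s4T v4) 2)) = true := by
      cases hσb : σb
      · rfl
      · rw [hv4]
        cases hb1 : S14.bitT m4 1
        · rfl
        · have hb2 : S14.bitT m4 2 = false := by
            cases hb : S14.bitT m4 2
            · rfl
            · exact absurd ⟨hb1, hb⟩ (hσ4 hσb)
          rw [hb2]
          rfl
    refine hkill v4 hside4 ⟨?_, ?_, ?_⟩
    · rw [hv4, hv1]
      exact hrowOK R4 hR4m (R j) (hR j hjne) p4 p1 m4 m1 hcode4 hcode1 hm4 hm1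
    · rw [hv4, hv2]
      exact hrowOK R4 hR4m Rhat hRhatm p4 p2 m4 m2 hcode4 hcode2 hm4 hm2
    · rw [hv4, hv3]
      exact hrowOK R4 hR4m R'j hR'jm p4 p3 m4 m3 hcode4 hcode3 hm4 hm3
  constructor
  · rw [hO'eq _ (hok R'j hR'jm), hO3full, hrange']
    ext a
    simp only [Set.mem_diff, Set.mem_insert_iff, Set.mem_singleton_iff]
    constructor
    · rintro ⟨h | h | h, hne⟩
      · exact Or.inl h
      · exact absurd h hne
      · exact Or.inr h
    · rintro (h | h)
      · exact ⟨Or.inl h, by rw [h]; exact hxny⟩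
      · exact ⟨Or.inr (Or.inr h), by rw [h]; exact hzy⟩
  · rw [hO3full, hrange]
end

section
/- Under the PART 3 setup, assume in addition that the restriction f' of f to 𝓓' is non-dictatorial. Let R̄_{-i}, R̂_{-i} ∈ ∏_{j≠i} 𝓡_j be two subprofiles satisfying: (a) O_i(R̄_{-i}, 𝓡'_i) = {x} and O_i(R̄_{-i}, 𝓡_i) = {x, y}; (b) O_i(R̂_{-i}, 𝓡'_i) = O_i(R̂_{-i}, 𝓡_i) and this common set equals {z} or {x, z}; (c) for all subprofiles R̄'_{-i}, R̂'_{-i} satisfying (a) and (b) respectively, d_{r(f)}(R̄'_{-i}, R̂'_{-i}) ≥ d_{r(f)}(R̄_{-i}, R̂_{-i}); and (d) R̄_j = R̂_j for all j ∉ D_{r(f)}(R̄_{-i}, R̂_{-i}). Then for every agent j ∈ D_{r(f)}(R̄_{-i}, R̂_{-i}), both {x, y} ∈ S^{-1}(𝓡_j) and {x, z} ∈ S^{-1}(𝓡_j). -/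
section Helpers

variable {X : Type*}

lemma sto_of_mem {B : Set (Pref X)} (h : NonConditional B) {P : Pref X} (hP : P ∈ B) :
    IsStrictTotalOrder X P := by
  rw [h] at hP; exact hP.1

lemma respects_of_mem {B : Set (Pref X)} (h : NonConditional B) {P : Pref X} (hP : P ∈ B) :
    ∀ p ∈ fixedPairs B, P p.1 p.2 := by
  rw [h] at hP; exact hP.2

lemma mem_of_nc {B : Set (Pref X)} (h : NonConditional B) {P : Pref X}
    (h1 : IsStrictTotalOrder X P) (h2 : ∀ p ∈ fixedPairs B, P p.1 p.2) : P ∈ B := by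
  rw [h]; exact ⟨h1, h2⟩

lemma sto_tri {P : Pref X} (h : IsStrictTotalOrder X P) (a b : X) :
    a = b ∨ P a b ∨ P b a := by
  haveI := h
  rcases trichotomous_of P a b with h' | h' | h'
  · exact Or.inr (Or.inl h')
  · exact Or.inl h'
  · exact Or.inr (Or.inr h')

lemma sto_asymm {P : Pref X} (h : IsStrictTotalOrder X P) {a b : X} (hab : P a b) :
    ¬ P b a := fun h' => h.irrefl a (h.trans a b a hab h')

lemma sto_trans {P : Pref X} (h : IsStrictTotalOrder X P) {a b c : X}
    (hab : P a b) (hbc : P b c) : P a c := h.trans a b c hab hbc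

lemma fix_asymm {B : Set (Pref X)} (hNC : NonConditional B) (hne : B.Nonempty)
    {a b : X} (h1 : (a, b) ∈ fixedPairs B) (h2 : (b, a) ∈ fixedPairs B) : False := by
  obtain ⟨P, hP⟩ := hne
  exact sto_asymm (sto_of_mem hNC hP) (h1.2 P hP) (h2.2 P hP)

lemma fix_trans {B : Set (Pref X)} (hNC : NonConditional B) (hne : B.Nonempty)
    {a b c : X} (h1 : (a, b) ∈ fixedPairs B) (h2 : (b, c) ∈ fixedPairs B) :
    (a, c) ∈ fixedPairs B := by
  obtain ⟨P0, hP0⟩ := hne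
  constructor
  · intro hac
    simp only at hac
    subst hac
    exact sto_asymm (sto_of_mem hNC hP0) (h1.2 P0 hP0) (h2.2 P0 hP0)
  · intro P hP
    exact sto_trans (sto_of_mem hNC hP) (h1.2 P hP) (h2.2 P hP)

/-- Extend a strict partial order to a strict total order. -/
lemma exists_sto_extension (r : X → X → Prop) (hirr : ∀ a, ¬ r a a)
    (htr : ∀ {a b c}, r a b → r b c → r a c) :
    ∃ s : Pref X, IsStrictTotalOrder X s ∧ ∀ a b, r a b → s a b := by
  classical
  let r' : X → X → Prop := fun a b => r a b ∨ a = b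
  haveI : IsRefl X r' := ⟨fun a => Or.inr rfl⟩
  haveI : IsTrans X r' := ⟨by
    rintro a b c (hab | rfl) (hbc | rfl)
    · exact Or.inl (htr hab hbc)
    · exact Or.inl hab
    · exact Or.inl hbc
    · exact Or.inr rfl⟩
  haveI : IsAntisymm X r' := ⟨by
    rintro a b (hab | rfl) (hba | h)
    · exact absurd (htr hab hba) (hirr a)
    · exact h.symm
    · rfl
    · rfl⟩
  haveI : IsPreorder X r' := ⟨⟩
  haveI : IsPartialOrder X r' := ⟨⟩
  obtain ⟨s, hs, hrs⟩ := extend_partialOrder r'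
  refine ⟨fun a b => s a b ∧ a ≠ b, ?_, ?_⟩
  · haveI h1 : IsTrichotomous X (fun a b => s a b ∧ a ≠ b) := ⟨by
      intro a b hab hba
      by_contra h
      rcases hs.total a b with h' | h'
      · exact hab ⟨h', h⟩
      · exact hba ⟨h', fun hh => h hh.symm⟩⟩
    haveI h2 : IsIrrefl X (fun a b => s a b ∧ a ≠ b) := ⟨by intro a ha; exact ha.2 rfl⟩
    haveI h3 : IsTrans X (fun a b => s a b ∧ a ≠ b) := ⟨by
      rintro a b c ⟨hab, hab'⟩ ⟨hbc, hbc'⟩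
      refine ⟨hs.trans a b c hab hbc, ?_⟩
      rintro rfl
      exact hab' (hs.antisymm _ _ hab hbc)⟩
    haveI h4 : IsStrictOrder X (fun a b => s a b ∧ a ≠ b) := ⟨⟩
    exact ⟨⟩
  · intro a b hab
    refine ⟨hrs a b (Or.inl hab), ?_⟩
    rintro rfl
    exact hirr a hab

/-- In a nonempty non-conditional domain, find a member ranking `a ≻ b ≻ c`,
provided the reverse pairs are not fixed. -/
lemma exists_mem_two {B : Set (Pref X)} (hNC : NonConditional B) (hne : B.Nonempty)
    {a b c : X} (hab : a ≠ b) (hbc : b ≠ c) (hac : a ≠ c)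
    (h1 : (b, a) ∉ fixedPairs B) (h2 : (c, b) ∉ fixedPairs B) (h3 : (c, a) ∉ fixedPairs B) :
    ∃ P ∈ B, P a b ∧ P b c := by
  classical
  let F : X → X → Prop := fun u v => (u, v) ∈ fixedPairs B
  have Firr : ∀ u, ¬ F u u := fun u h => h.1 rfl
  have Ftr : ∀ {u v w}, F u v → F v w → F u w := fun h h' => fix_trans hNC hne h h'
  let r : X → X → Prop := fun u v =>
    F u v ∨ ((u = a ∨ F u a) ∧ (b = v ∨ F b v)) ∨ ((u = b ∨ F u b) ∧ (c = v ∨ F c v))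
      ∨ ((u = a ∨ F u a) ∧ (c = v ∨ F c v))
  have hFba : ¬ F b a := h1
  have hFcb : ¬ F c b := h2
  have hFca : ¬ F c a := h3
  -- irreflexivity
  have hirr : ∀ u, ¬ r u u := by
    rintro u (h | ⟨hu, hv⟩ | ⟨hu, hv⟩ | ⟨hu, hv⟩)
    · exact Firr u h
    · rcases hu with rfl | hu <;> rcases hv with h' | h'
      · exact hab h'.symm
      · exact hFba h'
      · exact hFba (h' ▸ hu)
      · exact hFba (Ftr h' hu)
    · rcases hu with rfl | hu <;> rcases hv with h' | h'
      · exact hbc h'.symm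
      · exact hFcb h'
      · exact hFcb (h' ▸ hu)
      · exact hFcb (Ftr h' hu)
    · rcases hu with rfl | hu <;> rcases hv with h' | h'
      · exact hac h'.symm
      · exact hFca h'
      · exact hFca (h' ▸ hu)
      · exact hFca (Ftr h' hu)
  -- helper: chain a "lower" bound with F
  have low_trans : ∀ {q v w : X}, (q = v ∨ F q v) → F v w → (q = w ∨ F q w) := by
    rintro q v w (rfl | h) h'
    · exact Or.inr h'
    · exact Or.inr (Ftr h h')
  have up_trans : ∀ {u v p : X}, F u v → (v = p ∨ F v p) → (u = p ∨ F u p) := by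
    rintro u v p h (rfl | h')
    · exact Or.inr h
    · exact Or.inr (Ftr h h')
  -- connecting lemma: (q = v ∨ F q v) and (v = p ∨ F v p) gives q = p ∨ F q p
  have conn : ∀ {q v p : X}, (q = v ∨ F q v) → (v = p ∨ F v p) → (q = p ∨ F q p) := by
    rintro q v p (rfl | h) h'
    · exact h'
    · exact up_trans h h'
  have htr : ∀ {u v w}, r u v → r v w → r u w := by
    have killba : ∀ {q : X}, (b = q ∨ F b q) → (q = a ∨ F q a) → False := by
      rintro q hq hq'
      rcases conn hq hq' with h'' | h''
      · exact hab h''.symm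
      · exact hFba h''
    have killcb : ∀ {q : X}, (c = q ∨ F c q) → (q = b ∨ F q b) → False := by
      rintro q hq hq'
      rcases conn hq hq' with h'' | h''
      · exact hbc h''.symm
      · exact hFcb h''
    have killca : ∀ {q : X}, (c = q ∨ F c q) → (q = a ∨ F q a) → False := by
      rintro q hq hq'
      rcases conn hq hq' with h'' | h''
      · exact hac h''.symm
      · exact hFca h''
    rintro u v w (h | ⟨hu, hv⟩ | ⟨hu, hv⟩ | ⟨hu, hv⟩) h2'
    · rcases h2' with h' | ⟨hu', hv'⟩ | ⟨hu', hv'⟩ | ⟨hu', hv'⟩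
      · exact Or.inl (Ftr h h')
      · exact Or.inr (Or.inl ⟨up_trans h hu', hv'⟩)
      · exact Or.inr (Or.inr (Or.inl ⟨up_trans h hu', hv'⟩))
      · exact Or.inr (Or.inr (Or.inr ⟨up_trans h hu', hv'⟩))
    · rcases h2' with h' | ⟨hu', hv'⟩ | ⟨hu', hv'⟩ | ⟨hu', hv'⟩
      · exact Or.inr (Or.inl ⟨hu, low_trans hv h'⟩)
      · exact (killba hv hu').elim
      · exact Or.inr (Or.inr (Or.inr ⟨hu, hv'⟩))
      · exact (killba hv hu').elim
    · rcases h2' with h' | ⟨hu', hv'⟩ | ⟨hu', hv'⟩ | ⟨hu', hv'⟩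
      · exact Or.inr (Or.inr (Or.inl ⟨hu, low_trans hv h'⟩))
      · exact (killca hv hu').elim
      · exact (killcb hv hu').elim
      · exact (killca hv hu').elim
    · rcases h2' with h' | ⟨hu', hv'⟩ | ⟨hu', hv'⟩ | ⟨hu', hv'⟩
      · exact Or.inr (Or.inr (Or.inr ⟨hu, low_trans hv h'⟩))
      · exact (killca hv hu').elim
      · exact (killcb hv hu').elim
      · exact (killca hv hu').elim
  obtain ⟨s, hs, hrs⟩ := exists_sto_extension r hirr (fun h h' => htr h h')
  refine ⟨s, mem_of_nc hNC hs ?_, ?_, ?_⟩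
  · intro p hp
    exact hrs p.1 p.2 (Or.inl hp)
  · exact hrs a b (Or.inr (Or.inl ⟨Or.inl rfl, Or.inl rfl⟩))
  · exact hrs b c (Or.inr (Or.inr (Or.inl ⟨Or.inl rfl, Or.inl rfl⟩)))

lemma exists_mem_one {B : Set (Pref X)} (hNC : NonConditional B) (hne : B.Nonempty)
    {a b : X} (hab : a ≠ b) (h1 : (b, a) ∉ fixedPairs B) :
    ∃ P ∈ B, P a b := by
  classical
  let F : X → X → Prop := fun u v => (u, v) ∈ fixedPairs B
  have Firr : ∀ u, ¬ F u u := fun u h => h.1 rfl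
  have Ftr : ∀ {u v w}, F u v → F v w → F u w := fun h h' => fix_trans hNC hne h h'
  let r : X → X → Prop := fun u v => F u v ∨ ((u = a ∨ F u a) ∧ (b = v ∨ F b v))
  have hirr : ∀ u, ¬ r u u := by
    rintro u (h | ⟨hu, hv⟩)
    · exact Firr u h
    · rcases hu with rfl | hu <;> rcases hv with h' | h'
      · exact hab h'.symm
      · exact h1 h'
      · exact h1 (h' ▸ hu)
      · exact h1 (Ftr h' hu)
  have htr : ∀ {u v w}, r u v → r v w → r u w := by
    rintro u v w (h | ⟨hu, hv⟩) (h' | ⟨hu', hv'⟩)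
    · exact Or.inl (Ftr h h')
    · refine Or.inr ⟨?_, hv'⟩
      rcases hu' with rfl | hu'
      · exact Or.inr h
      · exact Or.inr (Ftr h hu')
    · refine Or.inr ⟨hu, ?_⟩
      rcases hv with rfl | hv
      · exact Or.inr h'
      · exact Or.inr (Ftr hv h')
    · -- lower of first meets upper of second : b vs a
      exfalso
      have : b = a ∨ F b a := by
        rcases hv with rfl | hv <;> rcases hu' with h'' | h''
        · exact Or.inl h''
        · exact Or.inr h''
        · exact Or.inr (h'' ▸ hv)
        · exact Or.inr (Ftr hv h'')
      rcases this with h'' | h''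
      · exact hab h''.symm
      · exact h1 h''
  obtain ⟨s, hs, hrs⟩ := exists_sto_extension r hirr (fun h h' => htr h h')
  refine ⟨s, mem_of_nc hNC hs ?_, ?_⟩
  · intro p hp
    exact hrs p.1 p.2 (Or.inl hp)
  · exact hrs a b (Or.inr ⟨Or.inl rfl, Or.inl rfl⟩)

end Helpers

/-- `D_S(R_{-i}, R'_{-i})`: the set of agents `j ≠ i` whose preferences at the two
subprofiles differ when restricted to the set of alternatives `S`. -/
def diffAgents {N X : Type*} (i : N) (S : Set X) (R R' : N → Pref X) : Set N :=
  {j | j ≠ i ∧ ¬ ∀ a ∈ S, ∀ b ∈ S, (R j a b ↔ R' j a b)}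

theorem statement16 {N X : Type*} [Fintype N] [Nonempty N] [Fintype X] [DecidableEq N]
    (i : N) (𝓡 𝓡' : N → Set (Pref X))
    (hAgree : ∀ j, j ≠ i → 𝓡' j = 𝓡 j)
    (hNC : ∀ j, NonConditional (𝓡 j)) (hNC' : NonConditional (𝓡' i))
    (hss : 𝓡' i ⊂ 𝓡 i) (x y : X)
    (hxy : (x, y) ∈ fixedPairs (𝓡' i))
    (hS : fixedPairs (𝓡 i) = fixedPairs (𝓡' i) \ {(x, y)})
    (hnoz : ¬ ∃ z, (x, z) ∈ fixedPairs (𝓡' i) ∧ (z, y) ∈ fixedPairs (𝓡' i))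
    (f : (N → Pref X) → X) (hSP : StrategyProof 𝓡 f)
    (z : X) (hzx : z ≠ x) (hzy : z ≠ y)
    (hrange' : scrRange 𝓡' f = {x, z})
    (hrange : scrRange 𝓡 f = {x, y, z})
    (hND' : NonDictatorial 𝓡' f)
    (Rbar Rhat : N → Pref X)
    (hRbar : ∀ j, j ≠ i → Rbar j ∈ 𝓡 j) (hRhat : ∀ j, j ≠ i → Rhat j ∈ 𝓡 j)
    (ha1 : optionSet f i Rbar (𝓡' i) = {x})
    (ha2 : optionSet f i Rbar (𝓡 i) = {x, y})
    (hb1 : optionSet f i Rhat (𝓡' i) = optionSet f i Rhat (𝓡 i))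
    (hb2 : optionSet f i Rhat (𝓡 i) = {z} ∨ optionSet f i Rhat (𝓡 i) = {x, z})
    (hc : ∀ Rbar' Rhat' : N → Pref X,
      (∀ j, j ≠ i → Rbar' j ∈ 𝓡 j) → (∀ j, j ≠ i → Rhat' j ∈ 𝓡 j) →
      optionSet f i Rbar' (𝓡' i) = {x} → optionSet f i Rbar' (𝓡 i) = {x, y} →
      optionSet f i Rhat' (𝓡' i) = optionSet f i Rhat' (𝓡 i) →
      (optionSet f i Rhat' (𝓡 i) = {z} ∨ optionSet f i Rhat' (𝓡 i) = {x, z}) →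
      (diffAgents i (scrRange 𝓡 f) Rbar Rhat).ncard ≤
        (diffAgents i (scrRange 𝓡 f) Rbar' Rhat').ncard)
    (hd : ∀ j, j ≠ i → j ∉ diffAgents i (scrRange 𝓡 f) Rbar Rhat → Rbar j = Rhat j) :
    ∀ j ∈ diffAgents i (scrRange 𝓡 f) Rbar Rhat,
      FreePair (𝓡 j) x y ∧ FreePair (𝓡 j) x z := by
  classical
  intro j hj
  have hji : j ≠ i := hj.1
  -- basic nonemptiness and subset facts
  have hsub' : 𝓡' i ⊆ 𝓡 i := subset_of_ssubset hss
  have hxmem : x ∈ optionSet f i Rbar (𝓡' i) := by rw [ha1]; rfl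
  obtain ⟨P'0, hP'0, hP'0x⟩ := hxmem
  have hne' : (𝓡' i).Nonempty := ⟨P'0, hP'0⟩
  have hnei : (𝓡 i).Nonempty := ⟨P'0, hsub' hP'0⟩
  have hnej : (𝓡 j).Nonempty := ⟨Rbar j, hRbar j hji⟩
  have hstoi : ∀ {P : Pref X}, P ∈ 𝓡 i → IsStrictTotalOrder X P :=
    fun h => sto_of_mem (hNC i) h
  have hstoj : ∀ {P : Pref X}, P ∈ 𝓡 j → IsStrictTotalOrder X P :=
    fun h => sto_of_mem (hNC j) h
  have hxyne : x ≠ y := hxy.1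
  have hxzne : x ≠ z := Ne.symm hzx
  have hyzne : y ≠ z := Ne.symm hzy
  -- fixed pairs bookkeeping
  have hfix_sub : fixedPairs (𝓡 i) ⊆ fixedPairs (𝓡' i) := by
    rw [hS]; exact Set.diff_subset
  have hfix_of' : ∀ p ∈ fixedPairs (𝓡' i), p ≠ (x, y) → p ∈ fixedPairs (𝓡 i) := by
    intro p hp hpne; rw [hS]; exact ⟨hp, hpne⟩
  have hFixy : (x, y) ∉ fixedPairs (𝓡 i) := by
    rw [hS]; intro h; exact h.2 rfl
  have hresp_i : ∀ {P : Pref X}, P ∈ 𝓡 i → ∀ {a b : X}, (a, b) ∈ fixedPairs (𝓡 i) → P a b :=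
    by intro P hP a b h; exact respects_of_mem (hNC i) hP (a, b) h
  have hresp_j : ∀ {P : Pref X}, P ∈ 𝓡 j → ∀ {a b : X}, (a, b) ∈ fixedPairs (𝓡 j) → P a b :=
    by intro P hP a b h; exact respects_of_mem (hNC j) hP (a, b) h
  have hresp' : ∀ {P : Pref X}, P ∈ 𝓡' i → ∀ {a b : X}, (a, b) ∈ fixedPairs (𝓡' i) → P a b :=
    by intro P hP a b h; exact respects_of_mem hNC' hP (a, b) h
  -- domains of updated profiles
  have hInD : ∀ (Q : N → Pref X), (∀ l, l ≠ i → Q l ∈ 𝓡 l) → ∀ P ∈ 𝓡 i,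
      InDomain 𝓡 (Function.update Q i P) := by
    intro Q hQ P hP l
    rcases eq_or_ne l i with rfl | hl
    · simpa using hP
    · rw [Function.update_of_ne hl]; exact hQ l hl
  have hInD' : ∀ (Q : N → Pref X), (∀ l, l ≠ i → Q l ∈ 𝓡 l) → ∀ P' ∈ 𝓡' i,
      InDomain 𝓡' (Function.update Q i P') := by
    intro Q hQ P' hP' l
    rcases eq_or_ne l i with rfl | hl
    · simpa using hP'
    · rw [Function.update_of_ne hl, hAgree l hl]; exact hQ l hl
  have hupdom : ∀ (Q : N → Pref X), (∀ l, l ≠ i → Q l ∈ 𝓡 l) → ∀ Pj ∈ 𝓡 j,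
      (∀ l, l ≠ i → (Function.update Q j Pj) l ∈ 𝓡 l) := by
    intro Q hQ Pj hPj l hl
    rcases eq_or_ne l j with rfl | hlj
    · simpa using hPj
    · rw [Function.update_of_ne hlj]; exact hQ l hl
  -- the value of f lies in the range
  have hWrange : ∀ (Q : N → Pref X), (∀ l, l ≠ i → Q l ∈ 𝓡 l) → ∀ P ∈ 𝓡 i,
      f (Function.update Q i P) = x ∨ f (Function.update Q i P) = y ∨
        f (Function.update Q i P) = z := by
    intro Q hQ P hP
    have h : f (Function.update Q i P) ∈ scrRange 𝓡 f := ⟨_, hInD Q hQ P hP, rfl⟩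
    rw [hrange] at h
    simpa using h
  have hVrange : ∀ (Q : N → Pref X), (∀ l, l ≠ i → Q l ∈ 𝓡 l) → ∀ P' ∈ 𝓡' i,
      f (Function.update Q i P') = x ∨ f (Function.update Q i P') = z := by
    intro Q hQ P' hP'
    have h : f (Function.update Q i P') ∈ scrRange 𝓡' f := ⟨_, hInD' Q hQ P' hP', rfl⟩
    rw [hrange'] at h
    simpa using h
  -- maximality from strategy-proofness (agent i)
  have hmax : ∀ (Q : N → Pref X), (∀ l, l ≠ i → Q l ∈ 𝓡 l) → ∀ P ∈ 𝓡 i, ∀ Pb ∈ 𝓡 i,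
      f (Function.update Q i P) = f (Function.update Q i Pb) ∨
        P (f (Function.update Q i P)) (f (Function.update Q i Pb)) := by
    intro Q hQ P hP Pb hPb
    have h1 := hSP (Function.update Q i P) (hInD Q hQ P hP) i Pb hPb
    rw [Function.update_idem] at h1
    simp only [Function.update_self] at h1
    rcases sto_tri (hstoi hP) (f (Function.update Q i P)) (f (Function.update Q i Pb))
      with h | h | h
    · exact Or.inl h
    · exact Or.inr h
    · exact absurd h h1
  -- reversal lemma for a move of agent j
  have hrev : ∀ (Q : N → Pref X), (∀ l, l ≠ i → Q l ∈ 𝓡 l) → ∀ Pa ∈ 𝓡 j, ∀ Pb ∈ 𝓡 j,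
      ∀ P ∈ 𝓡 i,
      f (Function.update (Function.update Q j Pa) i P) =
        f (Function.update (Function.update Q j Pb) i P) ∨
      (Pa (f (Function.update (Function.update Q j Pa) i P))
          (f (Function.update (Function.update Q j Pb) i P)) ∧
       Pb (f (Function.update (Function.update Q j Pb) i P))
          (f (Function.update (Function.update Q j Pa) i P))) := by
    intro Q hQ Pa ha Pb hb P hP
    have hda : ∀ l, l ≠ i → (Function.update Q j Pa) l ∈ 𝓡 l := hupdom Q hQ Pa ha
    have hdb : ∀ l, l ≠ i → (Function.update Q j Pb) l ∈ 𝓡 l := hupdom Q hQ Pb hb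
    have key : ∀ (Pc : Pref X), Function.update (Function.update
        (Function.update Q j Pc) i P) j Pb = Function.update (Function.update Q j Pb) i P := by
      intro Pc
      rw [Function.update_comm (Ne.symm hji : i ≠ j), Function.update_idem]
    have h1 := hSP (Function.update (Function.update Q j Pa) i P)
      (hInD _ hda P hP) j Pb hb
    rw [key Pa] at h1
    simp only [Function.update_of_ne hji, Function.update_self] at h1
    have key2 : Function.update (Function.update (Function.update Q j Pb) i P) j Pa =
        Function.update (Function.update Q j Pa) i P := by
      rw [Function.update_comm (Ne.symm hji : i ≠ j), Function.update_idem]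
    have h2 := hSP (Function.update (Function.update Q j Pb) i P)
      (hInD _ hdb P hP) j Pa ha
    rw [key2] at h2
    simp only [Function.update_of_ne hji, Function.update_self] at h2
    rcases sto_tri (hstoj ha) (f (Function.update (Function.update Q j Pa) i P))
      (f (Function.update (Function.update Q j Pb) i P)) with h | h | h
    · exact Or.inl h
    · rcases sto_tri (hstoj hb) (f (Function.update (Function.update Q j Pb) i P))
        (f (Function.update (Function.update Q j Pa) i P)) with h' | h' | h'
      · exact Or.inl h'.symm
      · exact Or.inr ⟨h, h'⟩
      · exact absurd h' h2
    · exact absurd h h1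
  -- basic option-set facts at Rbar and Rhat
  have hVW : ∀ (Q : N → Pref X), optionSet f i Q (𝓡' i) ⊆ optionSet f i Q (𝓡 i) := by
    rintro Q a ⟨P, hP, e⟩; exact ⟨P, hsub' hP, e⟩
  have hQ0V : ∀ P' ∈ 𝓡' i, f (Function.update Rbar i P') = x := by
    intro P' hP'
    have h : f (Function.update Rbar i P') ∈ optionSet f i Rbar (𝓡' i) := ⟨P', hP', rfl⟩
    rw [ha1] at h; exact h
  have hQ0W : ∀ P ∈ 𝓡 i, f (Function.update Rbar i P) = x ∨ f (Function.update Rbar i P) = y := by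
    intro P hP
    have h : f (Function.update Rbar i P) ∈ optionSet f i Rbar (𝓡 i) := ⟨P, hP, rfl⟩
    rw [ha2] at h; simpa using h
  have hyW0 : y ∈ optionSet f i Rbar (𝓡 i) := by rw [ha2]; right; rfl
  obtain ⟨Py0, hPy0, hPy0y⟩ := hyW0
  have hQ0y : ∀ P ∈ 𝓡 i, P y x → f (Function.update Rbar i P) = y := by
    intro P hP hyx
    rcases hQ0W P hP with h | h
    · exfalso
      rcases hmax Rbar hRbar P hP Py0 hPy0 with h' | h'
      · rw [h, hPy0y] at h'; exact hxyne h'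
      · rw [h, hPy0y] at h'
        exact sto_asymm (hstoi hP) hyx h'
    · exact h
  have hzC' : z ∈ optionSet f i Rhat (𝓡' i) := by
    rw [hb1]; rcases hb2 with h | h <;> rw [h] <;> simp
  have hzC : z ∈ optionSet f i Rhat (𝓡 i) := hVW Rhat hzC'
  obtain ⟨P'c, hP'c, hP'cz⟩ := hzC'
  -- domains of the four basic subprofiles
  have hQtdom : ∀ l, l ≠ i → (Function.update Rhat j (Rbar j)) l ∈ 𝓡 l :=
    hupdom Rhat hRhat (Rbar j) (hRbar j hji)
  have hQ1dom : ∀ l, l ≠ i → (Function.update Rbar j (Rhat j)) l ∈ 𝓡 l :=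
    hupdom Rbar hRbar (Rhat j) (hRhat j hji)
  -- diffAgents computations
  have hDQt : diffAgents i (scrRange 𝓡 f) Rbar (Function.update Rhat j (Rbar j)) =
      diffAgents i (scrRange 𝓡 f) Rbar Rhat \ {j} := by
    ext l
    simp only [diffAgents, Set.mem_setOf_eq, Set.mem_diff, Set.mem_singleton_iff]
    rcases eq_or_ne l j with rfl | hlj
    · simp
    · rw [Function.update_of_ne hlj]; tauto
  have hDQ1R : diffAgents i (scrRange 𝓡 f) (Function.update Rbar j (Rhat j)) Rhat =
      diffAgents i (scrRange 𝓡 f) Rbar Rhat \ {j} := by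
    ext l
    simp only [diffAgents, Set.mem_setOf_eq, Set.mem_diff, Set.mem_singleton_iff]
    rcases eq_or_ne l j with rfl | hlj
    · simp
    · rw [Function.update_of_ne hlj]; tauto
  have hDQbb : ∀ Pj : Pref X, diffAgents i (scrRange 𝓡 f) (Function.update Rbar j Pj)
      (Function.update Rhat j Pj) = diffAgents i (scrRange 𝓡 f) Rbar Rhat \ {j} := by
    intro Pj
    ext l
    simp only [diffAgents, Set.mem_setOf_eq, Set.mem_diff, Set.mem_singleton_iff]
    rcases eq_or_ne l j with rfl | hlj
    · simp
    · rw [Function.update_of_ne hlj, Function.update_of_ne hlj]; tauto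
  have hDQ01 : ∀ Pj : Pref X, diffAgents i (scrRange 𝓡 f) Rbar (Function.update Rbar j Pj)
      ⊆ {j} := by
    intro Pj l hl
    rcases eq_or_ne l j with rfl | hlj
    · rfl
    · exfalso
      simp only [diffAgents, Set.mem_setOf_eq, Function.update_of_ne hlj] at hl
      exact hl.2 (fun a _ b _ => trivial)
  have hlt : (diffAgents i (scrRange 𝓡 f) Rbar Rhat \ {j}).ncard <
      (diffAgents i (scrRange 𝓡 f) Rbar Rhat).ncard := by
    apply Set.ncard_lt_ncard _ (Set.toFinite _)
    exact ⟨Set.diff_subset, fun h2 => (h2 hj).2 rfl⟩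
  -- minimality instances
  have hM1 : ¬ (optionSet f i (Function.update Rhat j (Rbar j)) (𝓡' i) =
      optionSet f i (Function.update Rhat j (Rbar j)) (𝓡 i) ∧
      (optionSet f i (Function.update Rhat j (Rbar j)) (𝓡 i) = {z} ∨
       optionSet f i (Function.update Rhat j (Rbar j)) (𝓡 i) = {x, z})) := by
    rintro ⟨h1', h2'⟩
    have h := hc Rbar (Function.update Rhat j (Rbar j)) hRbar hQtdom ha1 ha2 h1' h2'
    rw [hDQt] at h
    exact absurd h (not_le.mpr hlt)
  have hM2 : ¬ (optionSet f i (Function.update Rbar j (Rhat j)) (𝓡' i) = {x} ∧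
      optionSet f i (Function.update Rbar j (Rhat j)) (𝓡 i) = {x, y}) := by
    rintro ⟨h1', h2'⟩
    have h := hc (Function.update Rbar j (Rhat j)) Rhat hQ1dom hRhat h1' h2' hb1 hb2
    rw [hDQ1R] at h
    exact absurd h (not_le.mpr hlt)
  have hM4 : ∀ Pj ∈ 𝓡 j,
      (optionSet f i (Function.update Rhat j Pj) (𝓡' i) =
        optionSet f i (Function.update Rhat j Pj) (𝓡 i) ∧
       (optionSet f i (Function.update Rhat j Pj) (𝓡 i) = {z} ∨
        optionSet f i (Function.update Rhat j Pj) (𝓡 i) = {x, z})) →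
      ¬ (optionSet f i (Function.update Rbar j Pj) (𝓡' i) = {x} ∧
         optionSet f i (Function.update Rbar j Pj) (𝓡 i) = {x, y}) := by
    rintro Pj hPj ⟨hb1', hb2'⟩ ⟨ha1', ha2'⟩
    have h := hc (Function.update Rbar j Pj) (Function.update Rhat j Pj)
      (hupdom Rbar hRbar Pj hPj) (hupdom Rhat hRhat Pj hPj) ha1' ha2' hb1' hb2'
    rw [hDQbb] at h
    exact absurd h (not_le.mpr hlt)
  have hM3 : ∀ Pj ∈ 𝓡 j,
      (optionSet f i (Function.update Rbar j Pj) (𝓡' i) =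
        optionSet f i (Function.update Rbar j Pj) (𝓡 i) ∧
       (optionSet f i (Function.update Rbar j Pj) (𝓡 i) = {z} ∨
        optionSet f i (Function.update Rbar j Pj) (𝓡 i) = {x, z})) →
      diffAgents i (scrRange 𝓡 f) Rbar Rhat = {j} := by
    rintro Pj hPj ⟨hb1', hb2'⟩
    have h := hc Rbar (Function.update Rbar j Pj) hRbar
      (hupdom Rbar hRbar Pj hPj) ha1 ha2 hb1' hb2'
    have h2 : (diffAgents i (scrRange 𝓡 f) Rbar (Function.update Rbar j Pj)).ncard ≤ 1 := by
      have := Set.ncard_le_ncard (hDQ01 Pj) (Set.toFinite _)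
      simpa using this
    have h3 : (diffAgents i (scrRange 𝓡 f) Rbar Rhat).ncard ≤ ({j} : Set N).ncard := by
      rw [Set.ncard_singleton]; exact le_trans h h2
    exact (Set.eq_of_subset_of_ncard_le (Set.singleton_subset_iff.mpr hj) h3
      (Set.toFinite _)).symm
  have hDh1 : ∀ Pj : Pref X,
      diffAgents i (scrRange 𝓡 f) (Function.update Rhat j Pj) Rhat ⊆ {j} := by
    intro Pj l hl
    rcases eq_or_ne l j with rfl | hlj
    · rfl
    · exfalso
      simp only [diffAgents, Set.mem_setOf_eq, Function.update_of_ne hlj] at hl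
      exact hl.2 (fun a _ b _ => trivial)
  have hM3t : ∀ Pj ∈ 𝓡 j,
      (optionSet f i (Function.update Rhat j Pj) (𝓡' i) = {x} ∧
       optionSet f i (Function.update Rhat j Pj) (𝓡 i) = {x, y}) →
      diffAgents i (scrRange 𝓡 f) Rbar Rhat = {j} := by
    rintro Pj hPj ⟨ha1', ha2'⟩
    have h := hc (Function.update Rhat j Pj) Rhat (hupdom Rhat hRhat Pj hPj) hRhat
      ha1' ha2' hb1 hb2
    have h2 : (diffAgents i (scrRange 𝓡 f) (Function.update Rhat j Pj) Rhat).ncard ≤ 1 := by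
      have := Set.ncard_le_ncard (hDh1 Pj) (Set.toFinite _)
      simpa using this
    have h3 : (diffAgents i (scrRange 𝓡 f) Rbar Rhat).ncard ≤ ({j} : Set N).ncard := by
      rw [Set.ncard_singleton]; exact le_trans h h2
    exact (Set.eq_of_subset_of_ncard_le (Set.singleton_subset_iff.mpr hj) h3
      (Set.toFinite _)).symm
  -- congruence for profiles equal off i
  have hcongr : ∀ (Q Q' : N → Pref X), (∀ l, l ≠ i → Q l = Q' l) → ∀ P : Pref X,
      f (Function.update Q i P) = f (Function.update Q' i P) := by
    intro Q Q' h P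
    congr 1
    funext l
    rcases eq_or_ne l i with rfl | hl
    · simp
    · rw [Function.update_of_ne hl, Function.update_of_ne hl]; exact h l hl

  ------------------------------------------------------------------
  -- PROOF THAT {x,z} IS A FREE PAIR OF agent j's domain
  ------------------------------------------------------------------
  have hFPxz : FreePair (𝓡 j) x z := by
    by_contra hcon
    have hsg : (x, z) ∈ fixedPairs (𝓡 j) ∨ (z, x) ∈ fixedPairs (𝓡 j) := by
      by_contra h
      push_neg at h
      exact hcon ⟨hxzne, h.1, h.2⟩
    -- V-invariance under j-moves
    have hvinv : ∀ (Q : N → Pref X), (∀ l, l ≠ i → Q l ∈ 𝓡 l) → ∀ Pa ∈ 𝓡 j, ∀ Pb ∈ 𝓡 j,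
        ∀ P' ∈ 𝓡' i, f (Function.update (Function.update Q j Pa) i P') =
          f (Function.update (Function.update Q j Pb) i P') := by
      intro Q hQ Pa ha Pb hb P' hP'
      rcases hrev Q hQ Pa ha Pb hb P' (hsub' hP') with h | ⟨h1, h2⟩
      · exact h
      · exfalso
        rcases hVrange _ (hupdom Q hQ Pa ha) P' hP' with h3 | h3 <;>
          rcases hVrange _ (hupdom Q hQ Pb hb) P' hP' with h4 | h4 <;>
            rw [h3, h4] at h1 h2
        · exact (hstoj ha).irrefl x h1
        · rcases hsg with hfix | hfix
          · exact sto_asymm (hstoj hb) (hresp_j hb hfix) h2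
          · exact sto_asymm (hstoj ha) (hresp_j ha hfix) h1
        · rcases hsg with hfix | hfix
          · exact sto_asymm (hstoj ha) (hresp_j ha hfix) h1
          · exact sto_asymm (hstoj hb) (hresp_j hb hfix) h2
        · exact (hstoj ha).irrefl z h1
    have hS2t : ∀ P' ∈ 𝓡' i, f (Function.update (Function.update Rhat j (Rbar j)) i P') = f (Function.update Rhat i P') := by
      intro P' hP'
      have h := hvinv Rhat hRhat (Rbar j) (hRbar j hji) (Rhat j) (hRhat j hji) P' hP'
      rwa [Function.update_eq_self] at h
    have hS21 : ∀ P' ∈ 𝓡' i, f (Function.update (Function.update Rbar j (Rhat j)) i P') = x := by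
      intro P' hP'
      have h := hvinv Rbar hRbar (Rhat j) (hRhat j hji) (Rbar j) (hRbar j hji) P' hP'
      rw [Function.update_eq_self] at h
      rw [h]; exact hQ0V P' hP'
    have hQtP'c : f (Function.update (Function.update Rhat j (Rbar j)) i P'c) = z := by rw [hS2t P'c hP'c]; exact hP'cz
    -- Qt fails (b) : hence y is an outcome at Qt
    by_cases hyQt : ∃ Pw ∈ 𝓡 i, f (Function.update (Function.update Rhat j (Rbar j)) i Pw) = y
    case neg =>
      apply hM1
      have hVeqW : optionSet f i (Function.update Rhat j (Rbar j)) (𝓡' i) = optionSet f i (Function.update Rhat j (Rbar j)) (𝓡 i) := by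
        apply Set.Subset.antisymm (hVW _)
        rintro a ⟨P, hP, e⟩
        rcases hWrange (Function.update Rhat j (Rbar j)) hQtdom P hP with h | h | h
        · by_cases hxV : ∃ P' ∈ 𝓡' i, f (Function.update (Function.update Rhat j (Rbar j)) i P') = x
          · obtain ⟨P', h1, h2⟩ := hxV
            rw [← e, h]
            exact ⟨P', h1, h2⟩
          · exfalso
            push_neg at hxV
            have hfix : (z, x) ∈ fixedPairs (𝓡' i) := by
              refine ⟨hzx, fun P' hP' => ?_⟩
              have hz' : f (Function.update (Function.update Rhat j (Rbar j)) i P') = z := by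
                rcases hVrange (Function.update Rhat j (Rbar j)) hQtdom P' hP' with h' | h'
                · exact absurd h' (hxV P' hP')
                · exact h'
              rcases hmax (Function.update Rhat j (Rbar j)) hQtdom P' (hsub' hP') P hP with h' | h'
              · rw [hz', h] at h'; exact absurd h' hzx
              · rwa [hz', h] at h'
            have hF : (z, x) ∈ fixedPairs (𝓡 i) :=
              hfix_of' _ hfix (fun hh => hzx (congrArg Prod.fst hh))
            have hPzx : P z x := hresp_i hP hF
            rcases hmax (Function.update Rhat j (Rbar j)) hQtdom P hP P'c (hsub' hP'c) with h' | h'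
            · rw [h, hQtP'c] at h'; exact hxzne h'
            · rw [h, hQtP'c] at h'
              exact sto_asymm (hstoi hP) h' hPzx
        · exfalso
          push_neg at hyQt
          exact (hyQt P hP) h
        · rw [← e, h]
          exact ⟨P'c, hP'c, hQtP'c⟩
      refine ⟨hVeqW, ?_⟩
      have heq : optionSet f i (Function.update Rhat j (Rbar j)) (𝓡 i) = optionSet f i Rhat (𝓡 i) := by
        rw [← hVeqW, ← hb1]
        ext a; constructor
        · rintro ⟨P', h1, h2⟩; exact ⟨P', h1, by rw [← (hS2t P' h1)]; exact h2⟩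
        · rintro ⟨P', h1, h2⟩; exact ⟨P', h1, by rw [hS2t P' h1]; exact h2⟩
      rw [heq]; exact hb2
    case pos =>
    obtain ⟨Py, hPy, hPyy⟩ := hyQt
    have hPyyz : Py y z := by
      rcases hmax (Function.update Rhat j (Rbar j)) hQtdom Py hPy P'c (hsub' hP'c) with h | h
      · rw [hPyy, hQtP'c] at h; exact absurd h hyzne
      · rwa [hPyy, hQtP'c] at h
    have hnfix_zy : (z, y) ∉ fixedPairs (𝓡' i) := by
      intro hfix
      have hF : (z, y) ∈ fixedPairs (𝓡 i) :=
        hfix_of' _ hfix (fun hh => hzx (congrArg Prod.fst hh))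
      exact sto_asymm (hstoi hPy) hPyyz (hresp_i hPy hF)
    obtain ⟨Pq, hPqm, hPqyz⟩ := exists_mem_one hNC' hne' hyzne hnfix_zy
    have hPqx : f (Function.update (Function.update Rhat j (Rbar j)) i Pq) = x := by
      rcases hVrange (Function.update Rhat j (Rbar j)) hQtdom Pq hPqm with h | h
      · exact h
      · exfalso
        rcases hmax (Function.update Rhat j (Rbar j)) hQtdom Pq (hsub' hPqm) Py hPy with h' | h'
        · rw [h, hPyy] at h'; exact hzy h'
        · rw [h, hPyy] at h'
          exact sto_asymm (sto_of_mem hNC' hPqm) hPqyz h'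
    have hxC : x ∈ optionSet f i Rhat (𝓡 i) :=
      hVW Rhat ⟨Pq, hPqm, by rw [← hS2t Pq hPqm]; exact hPqx⟩
    have hCxz : optionSet f i Rhat (𝓡 i) = {x, z} := by
      rcases hb2 with h | h
      · exfalso; rw [h] at hxC; exact hxzne (by simpa using hxC)
      · exact h
    have hxCmem : x ∈ optionSet f i Rhat (𝓡 i) := by rw [hCxz]; exact Or.inl rfl
    obtain ⟨Pcx, hPcx, hPcxx⟩ := hxCmem
    have hxCmem' : x ∈ optionSet f i Rhat (𝓡' i) := by rw [hb1, hCxz]; exact Or.inl rfl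
    obtain ⟨P'x, hP'x, hP'xx⟩ := hxCmem'
    have hnfix_xz : (x, z) ∉ fixedPairs (𝓡' i) := by
      intro hfix
      have h : P'c z x := by
        rcases hmax Rhat hRhat P'c (hsub' hP'c) Pcx hPcx with h' | h'
        · rw [hP'cz, hPcxx] at h'; exact absurd h'.symm hxzne
        · rwa [hP'cz, hPcxx] at h'
      exact sto_asymm (sto_of_mem hNC' hP'c) h (hfix.2 P'c hP'c)
    have hnfix_zx : (z, x) ∉ fixedPairs (𝓡' i) := by
      intro hfix
      have h : P'x x z := by
        rcases hmax Rhat hRhat P'x (hsub' hP'x) P'c (hsub' hP'c) with h' | h'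
        · rw [hP'xx, hP'cz] at h'; exact absurd h' hxzne
        · rwa [hP'xx, hP'cz] at h'
      exact sto_asymm (sto_of_mem hNC' hP'x) h (hfix.2 P'x hP'x)
    have hnF_xz : (x, z) ∉ fixedPairs (𝓡 i) := fun h => hnfix_xz (hfix_sub h)
    have hnF_zx : (z, x) ∉ fixedPairs (𝓡 i) := fun h => hnfix_zx (hfix_sub h)
    have hnF_zy : (z, y) ∉ fixedPairs (𝓡 i) := fun h => hnfix_zy (hfix_sub h)
    obtain ⟨Pd, hPd, hPdyz, hPdzx⟩ :=
      exists_mem_two (hNC i) hnei hyzne hzx (Ne.symm hxyne) hnF_zy hnF_xz hFixy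
    have hPdyx : Pd y x := sto_trans (hstoi hPd) hPdyz hPdzx
    obtain ⟨Pe, hPe, hPeyx, hPexz⟩ :=
      exists_mem_two (hNC i) hnei (Ne.symm hxyne) hxzne hyzne hFixy hnF_zx hnF_zy
    have hPeyz : Pe y z := sto_trans (hstoi hPe) hPeyx hPexz
    have hQtPd : f (Function.update (Function.update Rhat j (Rbar j)) i Pd) = y := by
      rcases hWrange (Function.update Rhat j (Rbar j)) hQtdom Pd hPd with h | h | h
      · exfalso
        rcases hmax (Function.update Rhat j (Rbar j)) hQtdom Pd hPd Py hPy with h' | h'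
        · rw [h, hPyy] at h'; exact hxyne h'
        · rw [h, hPyy] at h'; exact sto_asymm (hstoi hPd) hPdyx h'
      · exact h
      · exfalso
        rcases hmax (Function.update Rhat j (Rbar j)) hQtdom Pd hPd Py hPy with h' | h'
        · rw [h, hPyy] at h'; exact hzy h'
        · rw [h, hPyy] at h'; exact sto_asymm (hstoi hPd) hPdyz h'
    have hQhPd : f (Function.update Rhat i Pd) = z := by
      have hmem : f (Function.update Rhat i Pd) ∈ optionSet f i Rhat (𝓡 i) := ⟨Pd, hPd, rfl⟩
      rw [hCxz] at hmem
      simp only [Set.mem_insert_iff, Set.mem_singleton_iff] at hmem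
      rcases hmem with h | h
      · exfalso
        rcases hmax Rhat hRhat Pd hPd P'c (hsub' hP'c) with h' | h'
        · rw [h, hP'cz] at h'; exact hxzne h'
        · rw [h, hP'cz] at h'; exact sto_asymm (hstoi hPd) hPdzx h'
      · exact h
    have hQhPe : f (Function.update Rhat i Pe) = x := by
      have hmem : f (Function.update Rhat i Pe) ∈ optionSet f i Rhat (𝓡 i) := ⟨Pe, hPe, rfl⟩
      rw [hCxz] at hmem
      simp only [Set.mem_insert_iff, Set.mem_singleton_iff] at hmem
      rcases hmem with h | h
      · exact h
      · exfalso
        rcases hmax Rhat hRhat Pe hPe Pcx hPcx with h' | h'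
        · rw [h, hPcxx] at h'; exact hzx h'
        · rw [h, hPcxx] at h'; exact sto_asymm (hstoi hPe) hPexz h'
    have hrevtd := hrev Rhat hRhat (Rbar j) (hRbar j hji) (Rhat j) (hRhat j hji) Pd hPd
    rw [Function.update_eq_self, hQtPd, hQhPd] at hrevtd
    have hbaryz : Rbar j y z ∧ Rhat j z y := by
      rcases hrevtd with h | h
      · exact absurd h hyzne
      · exact h
    have hQ1z : ∀ P ∈ 𝓡 i, f (Function.update (Function.update Rbar j (Rhat j)) i P) ≠ z := by
      intro P hP he
      apply hnfix_xz
      refine ⟨hxzne, fun P' hP' => ?_⟩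
      rcases hmax (Function.update Rbar j (Rhat j)) hQ1dom P' (hsub' hP') P hP with h' | h'
      · rw [hS21 P' hP', he] at h'; exact absurd h' hxzne
      · rwa [hS21 P' hP', he] at h'
    have hQ1x : ∀ P ∈ 𝓡 i, f (Function.update (Function.update Rbar j (Rhat j)) i P) = x := by
      intro P hP
      rcases hWrange (Function.update Rbar j (Rhat j)) hQ1dom P hP with h | h | h
      · exact h
      · exfalso
        apply hM2
        constructor
        · ext a
          simp only [optionSet, Set.mem_setOf_eq, Set.mem_singleton_iff]
          constructor
          · rintro ⟨P', h1, h2⟩; rw [← h2]; exact hS21 P' h1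
          · rintro rfl; exact ⟨P'0, hP'0, hS21 P'0 hP'0⟩
        · ext a
          simp only [optionSet, Set.mem_setOf_eq, Set.mem_insert_iff, Set.mem_singleton_iff]
          constructor
          · rintro ⟨Pw, h1, rfl⟩
            rcases hWrange (Function.update Rbar j (Rhat j)) hQ1dom Pw h1 with h' | h' | h'
            · exact Or.inl h'
            · exact Or.inr h'
            · exact absurd h' (hQ1z Pw h1)
          · rintro (rfl | rfl)
            · exact ⟨P'0, hsub' hP'0, hS21 P'0 hP'0⟩
            · exact ⟨P, hP, h⟩
      · exact absurd h (hQ1z P hP)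
    have hrev01e := hrev Rbar hRbar (Rbar j) (hRbar j hji) (Rhat j) (hRhat j hji) Pe hPe
    rw [Function.update_eq_self, hQ0y Pe hPe hPeyx, hQ1x Pe hPe] at hrev01e
    have hbaryx : Rbar j y x ∧ Rhat j x y := by
      rcases hrev01e with h | h
      · exact absurd h (Ne.symm hxyne)
      · exact h
    have hRbj := hRbar j hji
    have hRhj := hRhat j hji
    have hnFj_xy : (x, y) ∉ fixedPairs (𝓡 j) :=
      fun h => sto_asymm (hstoj hRbj) hbaryx.1 (hresp_j hRbj h)
    have hnFj_yx : (y, x) ∉ fixedPairs (𝓡 j) :=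
      fun h => sto_asymm (hstoj hRhj) hbaryx.2 (hresp_j hRhj h)
    have hnFj_zy : (z, y) ∉ fixedPairs (𝓡 j) :=
      fun h => sto_asymm (hstoj hRbj) hbaryz.1 (hresp_j hRbj h)
    have hnFj_yz : (y, z) ∉ fixedPairs (𝓡 j) :=
      fun h => sto_asymm (hstoj hRhj) hbaryz.2 (hresp_j hRhj h)
    rcases hsg with hsf | hsf
    · -- (x,z) fixed for j
      have hnFj_zx : (z, x) ∉ fixedPairs (𝓡 j) := fun h => fix_asymm (hNC j) hnej hsf h
      obtain ⟨Pr, hPr, hPrxy, hPryz⟩ :=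
        exists_mem_two (hNC j) hnej hxyne hyzne hxzne hnFj_yx hnFj_zy hnFj_zx
      have hPrxz : Pr x z := sto_trans (hstoj hPr) hPrxy hPryz
      have hQh2dom : ∀ l, l ≠ i → (Function.update Rhat j Pr) l ∈ 𝓡 l := hupdom Rhat hRhat Pr hPr
      have h19 : f (Function.update (Function.update Rhat j Pr) i Pe) = x := by
        have hr := hrev Rhat hRhat (Rhat j) hRhj Pr hPr Pe hPe
        rw [Function.update_eq_self, hQhPe] at hr
        rcases hr with h | ⟨h1, h2⟩
        · exact h.symm
        · exfalso
          rcases hWrange _ hQh2dom Pe hPe with h' | h' | h'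
          · rw [h'] at h2; exact (hstoj hPr).irrefl x h2
          · rw [h'] at h2; exact sto_asymm (hstoj hPr) hPrxy h2
          · rw [h'] at h2; exact sto_asymm (hstoj hPr) hPrxz h2
      have h20 : f (Function.update (Function.update Rhat j Pr) i Pd) = z ∨ f (Function.update (Function.update Rhat j Pr) i Pd) = y := by
        have hr := hrev Rhat hRhat (Rhat j) hRhj Pr hPr Pd hPd
        rw [Function.update_eq_self, hQhPd] at hr
        rcases hr with h | ⟨h1, h2⟩
        · exact Or.inl h.symm
        · rcases hWrange _ hQh2dom Pd hPd with h' | h' | h'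
          · exfalso; rw [h'] at h1
            exact sto_asymm (hstoj hRhj) (hresp_j hRhj hsf) h1
          · exact Or.inr h'
          · exact Or.inl h'
      have h21 : f (Function.update (Function.update Rhat j Pr) i Pd) = y := by
        have hr := hrev Rhat hRhat (Rbar j) hRbj Pr hPr Pd hPd
        rw [hQtPd] at hr
        rcases hr with h | ⟨h1, h2⟩
        · rcases h20 with h' | h'
          · exfalso; rw [← h] at h'; exact hyzne h'
          · exact h'
        · rcases h20 with h' | h'
          · exfalso; rw [h'] at h2; exact sto_asymm (hstoj hPr) hPryz h2
          · exact h'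
      rcases hmax _ hQh2dom Pe hPe Pd hPd with h | h
      · rw [h19, h21] at h; exact hxyne h
      · rw [h19, h21] at h; exact sto_asymm (hstoi hPe) hPeyx h
    · -- (z,x) fixed for j
      have hnFj_xz : (x, z) ∉ fixedPairs (𝓡 j) := fun h => fix_asymm (hNC j) hnej h hsf
      obtain ⟨Pr, hPr, hPrzy, hPryx⟩ :=
        exists_mem_two (hNC j) hnej hzy (Ne.symm hxyne) hzx hnFj_yz hnFj_xy hnFj_xz
      have hPrzx : Pr z x := sto_trans (hstoj hPr) hPrzy hPryx
      have hQh2dom : ∀ l, l ≠ i → (Function.update Rhat j Pr) l ∈ 𝓡 l := hupdom Rhat hRhat Pr hPr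
      have hQb2dom : ∀ l, l ≠ i → (Function.update Rbar j Pr) l ∈ 𝓡 l := hupdom Rbar hRbar Pr hPr
      have h19 : f (Function.update (Function.update Rhat j Pr) i Pd) = z := by
        have hr := hrev Rhat hRhat (Rhat j) hRhj Pr hPr Pd hPd
        rw [Function.update_eq_self, hQhPd] at hr
        rcases hr with h | ⟨h1, h2⟩
        · exact h.symm
        · rcases hWrange _ hQh2dom Pd hPd with h' | h' | h'
          · exfalso; rw [h'] at h2; exact sto_asymm (hstoj hPr) hPrzx h2
          · exfalso; rw [h'] at h2; exact sto_asymm (hstoj hPr) hPrzy h2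
          · exact h'
      have h20 : f (Function.update (Function.update Rhat j Pr) i Pe) = x := by
        have hr := hrev Rhat hRhat (Rhat j) hRhj Pr hPr Pe hPe
        rw [Function.update_eq_self, hQhPe] at hr
        rcases hr with h | ⟨h1, h2⟩
        · exact h.symm
        · rcases hWrange _ hQh2dom Pe hPe with h' | h' | h'
          · exact h'
          · exfalso
            rcases hmax _ hQh2dom Pd hPd Pe hPe with hh | hh
            · rw [h19, h'] at hh; exact hzy hh
            · rw [h19, h'] at hh; exact sto_asymm (hstoi hPd) hPdyz hh
          · exfalso; rw [h'] at h1
            exact sto_asymm (hstoj hRhj) (hresp_j hRhj hsf) h1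
      have hnoy2 : ∀ P ∈ 𝓡 i, f (Function.update (Function.update Rhat j Pr) i P) ≠ y := by
        intro P hP he
        rcases hmax _ hQh2dom Pd hPd P hP with hh | hh
        · rw [h19, he] at hh; exact hzy hh
        · rw [h19, he] at hh; exact sto_asymm (hstoi hPd) hPdyz hh
      have hW2 : optionSet f i (Function.update Rhat j Pr) (𝓡 i) = {x, z} := by
        ext a
        simp only [optionSet, Set.mem_setOf_eq, Set.mem_insert_iff, Set.mem_singleton_iff]
        constructor
        · rintro ⟨P, hP, rfl⟩
          rcases hWrange _ hQh2dom P hP with h' | h' | h'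
          · exact Or.inl h'
          · exact absurd h' (hnoy2 P hP)
          · exact Or.inr h'
        · rintro (rfl | rfl)
          · exact ⟨Pe, hPe, h20⟩
          · exact ⟨Pd, hPd, h19⟩
      have hv2 : ∀ P' ∈ 𝓡' i, f (Function.update (Function.update Rhat j Pr) i P') = f (Function.update Rhat i P') := by
        intro P' hP'
        have h := hvinv Rhat hRhat Pr hPr (Rhat j) hRhj P' hP'
        rwa [Function.update_eq_self] at h
      have hV2 : optionSet f i (Function.update Rhat j Pr) (𝓡' i) = {x, z} := by
        ext a
        simp only [optionSet, Set.mem_setOf_eq, Set.mem_insert_iff, Set.mem_singleton_iff]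
        constructor
        · rintro ⟨P', hP', rfl⟩
          rcases hVrange _ hQh2dom P' hP' with h' | h'
          · exact Or.inl h'
          · exact Or.inr h'
        · rintro (rfl | rfl)
          · exact ⟨P'x, hP'x, by rw [hv2 P'x hP'x]; exact hP'xx⟩
          · exact ⟨P'c, hP'c, by rw [hv2 P'c hP'c]; exact hP'cz⟩
      have hMb := hM4 Pr hPr ⟨by rw [hW2, hV2], Or.inr hW2⟩
      have hvb : ∀ P' ∈ 𝓡' i, f (Function.update (Function.update Rbar j Pr) i P') = x := by
        intro P' hP'
        have h := hvinv Rbar hRbar Pr hPr (Rbar j) hRbj P' hP'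
        rw [Function.update_eq_self] at h
        rw [h]; exact hQ0V P' hP'
      have hQbz : ∀ P ∈ 𝓡 i, f (Function.update (Function.update Rbar j Pr) i P) ≠ z := by
        intro P hP he
        apply hnfix_xz
        refine ⟨hxzne, fun P' hP' => ?_⟩
        rcases hmax _ hQb2dom P' (hsub' hP') P hP with h' | h'
        · rw [hvb P' hP', he] at h'; exact absurd h' hxzne
        · rwa [hvb P' hP', he] at h'
      have hQbx : ∀ P ∈ 𝓡 i, f (Function.update (Function.update Rbar j Pr) i P) = x := by
        intro P hP
        rcases hWrange _ hQb2dom P hP with h | h | h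
        · exact h
        · exfalso
          apply hMb
          constructor
          · ext a
            simp only [optionSet, Set.mem_setOf_eq, Set.mem_singleton_iff]
            constructor
            · rintro ⟨P', h1, rfl⟩; exact hvb P' h1
            · rintro rfl; exact ⟨P'0, hP'0, hvb P'0 hP'0⟩
          · ext a
            simp only [optionSet, Set.mem_setOf_eq, Set.mem_insert_iff, Set.mem_singleton_iff]
            constructor
            · rintro ⟨Pw, h1, rfl⟩
              rcases hWrange _ hQb2dom Pw h1 with h' | h' | h'
              · exact Or.inl h'
              · exact Or.inr h'
              · exact absurd h' (hQbz Pw h1)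
            · rintro (rfl | rfl)
              · exact ⟨P'0, hsub' hP'0, hvb P'0 hP'0⟩
              · exact ⟨P, hP, h⟩
        · exact absurd h (hQbz P hP)
      have hr := hrev Rbar hRbar (Rbar j) hRbj Pr hPr Pe hPe
      rw [Function.update_eq_self, hQ0y Pe hPe hPeyx, hQbx Pe hPe] at hr
      rcases hr with h | ⟨h1, h2⟩
      · exact (Ne.symm hxyne) h
      · exact sto_asymm (hstoj hPr) hPryx h2

  ------------------------------------------------------------------
  -- PROOF THAT {x,y} IS A FREE PAIR OF agent j's domain
  ------------------------------------------------------------------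
  have hFPxy : FreePair (𝓡 j) x y := by
    by_contra hcon
    have htg : (x, y) ∈ fixedPairs (𝓡 j) ∨ (y, x) ∈ fixedPairs (𝓡 j) := by
      by_contra h
      push_neg at h
      exact hcon ⟨hxyne, h.1, h.2⟩
    have hRbj := hRbar j hji
    have hRhj := hRhat j hji
    have htcon : Rbar j y x → Rhat j x y → False := by
      intro h1 h2
      rcases htg with h | h
      · exact sto_asymm (hstoj hRbj) (hresp_j hRbj h) h1
      · exact sto_asymm (hstoj hRhj) (hresp_j hRhj h) h2
    obtain ⟨P1, hP1, hP1yx⟩ := exists_mem_one (hNC i) hnei (Ne.symm hxyne) hFixy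
    -- T1 : z is an outcome at (Function.update Rbar j (Rhat j))
    have hT1 : ∃ Pz ∈ 𝓡 i, f (Function.update (Function.update Rbar j (Rhat j)) i Pz) = z := by
      by_contra hno
      push_neg at hno
      have hV1x : ∀ P' ∈ 𝓡' i, f (Function.update (Function.update Rbar j (Rhat j)) i P') = x := by
        intro P' hP'
        rcases hVrange (Function.update Rbar j (Rhat j)) hQ1dom P' hP' with h | h
        · exact h
        · exact absurd h (hno P' (hsub' hP'))
      have hQ1x : ∀ P ∈ 𝓡 i, f (Function.update (Function.update Rbar j (Rhat j)) i P) = x := by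
        intro P hP
        rcases hWrange (Function.update Rbar j (Rhat j)) hQ1dom P hP with h | h | h
        · exact h
        · exfalso
          apply hM2
          constructor
          · ext a
            simp only [optionSet, Set.mem_setOf_eq, Set.mem_singleton_iff]
            constructor
            · rintro ⟨P', h1, h2⟩; rw [← h2]; exact hV1x P' h1
            · rintro rfl; exact ⟨P'0, hP'0, hV1x P'0 hP'0⟩
          · ext a
            simp only [optionSet, Set.mem_setOf_eq, Set.mem_insert_iff, Set.mem_singleton_iff]
            constructor
            · rintro ⟨Pw, h1, rfl⟩
              rcases hWrange (Function.update Rbar j (Rhat j)) hQ1dom Pw h1 with h' | h' | h'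
              · exact Or.inl h'
              · exact Or.inr h'
              · exact absurd h' (hno Pw h1)
            · rintro (rfl | rfl)
              · exact ⟨P'0, hsub' hP'0, hV1x P'0 hP'0⟩
              · exact ⟨P, hP, h⟩
        · exact absurd h (hno P hP)
      have hr := hrev Rbar hRbar (Rbar j) hRbj (Rhat j) hRhj P1 hP1
      rw [Function.update_eq_self, hQ0y P1 hP1 hP1yx, hQ1x P1 hP1] at hr
      rcases hr with h | ⟨h1, h2⟩
      · exact (Ne.symm hxyne) h
      · exact htcon h1 h2
    obtain ⟨Pz1, hPz1, hPz1z⟩ := hT1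
    by_cases hD1 : diffAgents i (scrRange 𝓡 f) Rbar Rhat = {j}
    case neg =>
      -- T3 : y is an outcome at (Function.update Rbar j (Rhat j))
      have hT3 : ∃ Pw ∈ 𝓡 i, f (Function.update (Function.update Rbar j (Rhat j)) i Pw) = y := by
        by_contra hno
        push_neg at hno
        apply hD1
        apply hM3 (Rhat j) hRhj
        have hWV : ∀ a, a ∈ optionSet f i (Function.update Rbar j (Rhat j)) (𝓡 i) → a ∈ optionSet f i (Function.update Rbar j (Rhat j)) (𝓡' i) := by
          rintro a ⟨P, hP, e⟩
          rcases hWrange (Function.update Rbar j (Rhat j)) hQ1dom P hP with h | h | h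
          · rw [show a = x from e.symm.trans h]
            by_cases hxV : ∃ P' ∈ 𝓡' i, f (Function.update (Function.update Rbar j (Rhat j)) i P') = x
            · exact hxV
            · exfalso
              push_neg at hxV
              have hfix : (z, x) ∈ fixedPairs (𝓡' i) := by
                refine ⟨hzx, fun P' hP' => ?_⟩
                have hz' : f (Function.update (Function.update Rbar j (Rhat j)) i P') = z := by
                  rcases hVrange (Function.update Rbar j (Rhat j)) hQ1dom P' hP' with h' | h'
                  · exact absurd h' (hxV P' hP')
                  · exact h'
                rcases hmax (Function.update Rbar j (Rhat j)) hQ1dom P' (hsub' hP') P hP with h' | h'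
                · rw [hz', h] at h'; exact absurd h' hzx
                · rwa [hz', h] at h'
              have hF : (z, x) ∈ fixedPairs (𝓡 i) :=
                hfix_of' _ hfix (fun hh => hzx (congrArg Prod.fst hh))
              rcases hmax (Function.update Rbar j (Rhat j)) hQ1dom P hP Pz1 hPz1 with h' | h'
              · rw [h, hPz1z] at h'; exact hxzne h'
              · rw [h, hPz1z] at h'; exact sto_asymm (hstoi hP) h' (hresp_i hP hF)
          · exact absurd h (hno P hP)
          · rw [show a = z from e.symm.trans h]
            rcases hVrange (Function.update Rbar j (Rhat j)) hQ1dom P'0 hP'0 with h0 | h0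
            · by_cases hzV : ∃ P' ∈ 𝓡' i, f (Function.update (Function.update Rbar j (Rhat j)) i P') = z
              · exact hzV
              · exfalso
                push_neg at hzV
                have hfix : (x, z) ∈ fixedPairs (𝓡' i) := by
                  refine ⟨hxzne, fun P' hP' => ?_⟩
                  have hx' : f (Function.update (Function.update Rbar j (Rhat j)) i P') = x := by
                    rcases hVrange (Function.update Rbar j (Rhat j)) hQ1dom P' hP' with h' | h'
                    · exact h'
                    · exact absurd h' (hzV P' hP')
                  rcases hmax (Function.update Rbar j (Rhat j)) hQ1dom P' (hsub' hP') P hP with h' | h'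
                  · rw [hx', h] at h'; exact absurd h' hxzne
                  · rwa [hx', h] at h'
                have hF : (x, z) ∈ fixedPairs (𝓡 i) :=
                  hfix_of' _ hfix (fun hh => hzy (congrArg Prod.snd hh))
                rcases hmax (Function.update Rbar j (Rhat j)) hQ1dom P hP P'0 (hsub' hP'0) with h' | h'
                · rw [h, h0] at h'; exact hzx h'
                · rw [h, h0] at h'; exact sto_asymm (hstoi hP) h' (hresp_i hP hF)
            · exact ⟨P'0, hP'0, h0⟩
        constructor
        · exact Set.Subset.antisymm (hVW _) (fun a ha => hWV a ha)
        · by_cases hxW : ∃ P ∈ 𝓡 i, f (Function.update (Function.update Rbar j (Rhat j)) i P) = x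
          · right
            ext a
            simp only [optionSet, Set.mem_setOf_eq, Set.mem_insert_iff, Set.mem_singleton_iff]
            constructor
            · rintro ⟨P, hP, rfl⟩
              rcases hWrange (Function.update Rbar j (Rhat j)) hQ1dom P hP with h' | h' | h'
              · exact Or.inl h'
              · exact absurd h' (hno P hP)
              · exact Or.inr h'
            · rintro (rfl | rfl)
              · obtain ⟨Pw, h1, h2⟩ := hxW; exact ⟨Pw, h1, h2⟩
              · exact ⟨Pz1, hPz1, hPz1z⟩
          · left
            push_neg at hxW
            ext a
            simp only [optionSet, Set.mem_setOf_eq, Set.mem_singleton_iff]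
            constructor
            · rintro ⟨P, hP, rfl⟩
              rcases hWrange (Function.update Rbar j (Rhat j)) hQ1dom P hP with h' | h' | h'
              · exact absurd h' (hxW P hP)
              · exact absurd h' (hno P hP)
              · exact h'
            · rintro rfl; exact ⟨Pz1, hPz1, hPz1z⟩
      obtain ⟨Py1, hPy1, hPy1y⟩ := hT3
      have hPy1yz : Py1 y z := by
        rcases hmax (Function.update Rbar j (Rhat j)) hQ1dom Py1 hPy1 Pz1 hPz1 with h | h
        · rw [hPy1y, hPz1z] at h; exact absurd h hyzne
        · rwa [hPy1y, hPz1z] at h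
      have hnfix_zy : (z, y) ∉ fixedPairs (𝓡' i) := by
        intro hfix
        have hF := hfix_of' _ hfix (fun hh => hzx (congrArg Prod.fst hh))
        exact sto_asymm (hstoi hPy1) hPy1yz (hresp_i hPy1 hF)
      obtain ⟨Pg, hPgm, hPgyz⟩ := exists_mem_one hNC' hne' hyzne hnfix_zy
      have hPgxy : Pg x y := hresp' hPgm hxy
      have hPgxz : Pg x z := sto_trans (sto_of_mem hNC' hPgm) hPgxy hPgyz
      have hQ1Pg : f (Function.update (Function.update Rbar j (Rhat j)) i Pg) = x := by
        rcases hVrange (Function.update Rbar j (Rhat j)) hQ1dom Pg hPgm with h | h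
        · exact h
        · exfalso
          rcases hmax (Function.update Rbar j (Rhat j)) hQ1dom Pg (hsub' hPgm) Py1 hPy1 with h' | h'
          · rw [h, hPy1y] at h'; exact hzy h'
          · rw [h, hPy1y] at h'; exact sto_asymm (sto_of_mem hNC' hPgm) hPgyz h'
      have hnfix_zx : (z, x) ∉ fixedPairs (𝓡' i) := fun hfix =>
        sto_asymm (sto_of_mem hNC' hPgm) hPgxz (hfix.2 Pg hPgm)
      have hnfix_xz : (x, z) ∉ fixedPairs (𝓡' i) := by
        intro hfix
        have hF := hfix_of' _ hfix (fun hh => hzy (congrArg Prod.snd hh))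
        rcases hmax (Function.update Rbar j (Rhat j)) hQ1dom Pz1 hPz1 Pg (hsub' hPgm) with h' | h'
        · rw [hPz1z, hQ1Pg] at h'; exact hzx h'
        · rw [hPz1z, hQ1Pg] at h'; exact sto_asymm (hstoi hPz1) h' (hresp_i hPz1 hF)
      obtain ⟨Ph, hPhm, hPhzx⟩ := exists_mem_one hNC' hne' hzx hnfix_xz
      have hPhxy : Ph x y := hresp' hPhm hxy
      have hPhzy : Ph z y := sto_trans (sto_of_mem hNC' hPhm) hPhzx hPhxy
      have hQ1Ph : f (Function.update (Function.update Rbar j (Rhat j)) i Ph) = z := by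
        rcases hVrange (Function.update Rbar j (Rhat j)) hQ1dom Ph hPhm with h | h
        · exfalso
          rcases hmax (Function.update Rbar j (Rhat j)) hQ1dom Ph (hsub' hPhm) Pz1 hPz1 with h' | h'
          · rw [h, hPz1z] at h'; exact hxzne h'
          · rw [h, hPz1z] at h'; exact sto_asymm (sto_of_mem hNC' hPhm) hPhzx h'
        · exact h
      have hnF_zy : (z, y) ∉ fixedPairs (𝓡 i) := fun h => hnfix_zy (hfix_sub h)
      have hnF_zx : (z, x) ∉ fixedPairs (𝓡 i) := fun h => hnfix_zx (hfix_sub h)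
      have hnF_xz : (x, z) ∉ fixedPairs (𝓡 i) := fun h => hnfix_xz (hfix_sub h)
      have hnF_yz : (y, z) ∉ fixedPairs (𝓡 i) := fun h =>
        sto_asymm (sto_of_mem hNC' hPhm) hPhzy (hresp' hPhm (hfix_sub h))
      obtain ⟨Ps, hPs, hPszy, hPsyx⟩ :=
        exists_mem_two (hNC i) hnei hzy (Ne.symm hxyne) hzx hnF_yz hFixy hnF_xz
      have hPszx : Ps z x := sto_trans (hstoi hPs) hPszy hPsyx
      have hQ0Ps : f (Function.update Rbar i Ps) = y := hQ0y Ps hPs hPsyx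
      have hQ1Ps : f (Function.update (Function.update Rbar j (Rhat j)) i Ps) = z := by
        rcases hWrange (Function.update Rbar j (Rhat j)) hQ1dom Ps hPs with h | h | h
        · exfalso
          rcases hmax (Function.update Rbar j (Rhat j)) hQ1dom Ps hPs Pz1 hPz1 with h' | h'
          · rw [h, hPz1z] at h'; exact hxzne h'
          · rw [h, hPz1z] at h'; exact sto_asymm (hstoi hPs) hPszx h'
        · exfalso
          rcases hmax (Function.update Rbar j (Rhat j)) hQ1dom Ps hPs Pz1 hPz1 with h' | h'
          · rw [h, hPz1z] at h'; exact hyzne h'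
          · rw [h, hPz1z] at h'; exact sto_asymm (hstoi hPs) hPszy h'
        · exact h
      have hrPs := hrev Rbar hRbar (Rbar j) hRbj (Rhat j) hRhj Ps hPs
      rw [Function.update_eq_self, hQ0Ps, hQ1Ps] at hrPs
      have hyzrev : Rbar j y z ∧ Rhat j z y := by
        rcases hrPs with h | h
        · exact absurd h hyzne
        · exact h
      by_cases hyQt : ∃ Pw ∈ 𝓡 i, f (Function.update (Function.update Rhat j (Rbar j)) i Pw) = y
      · -- BRANCH II
        obtain ⟨Pyt, hPyt, hPyty⟩ := hyQt
        have hzQt : ∃ P ∈ 𝓡 i, f (Function.update (Function.update Rhat j (Rbar j)) i P) = z := by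
          by_contra hno
          push_neg at hno
          apply hD1
          apply hM3t (Rbar j) hRbj
          constructor
          · ext a
            simp only [optionSet, Set.mem_setOf_eq, Set.mem_singleton_iff]
            constructor
            · rintro ⟨P', h1, rfl⟩
              rcases hVrange (Function.update Rhat j (Rbar j)) hQtdom P' h1 with h' | h'
              · exact h'
              · exact absurd h' (hno P' (hsub' h1))
            · rintro rfl
              refine ⟨P'0, hP'0, ?_⟩
              rcases hVrange (Function.update Rhat j (Rbar j)) hQtdom P'0 hP'0 with h' | h'
              · exact h'
              · exact absurd h' (hno P'0 (hsub' hP'0))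
          · ext a
            simp only [optionSet, Set.mem_setOf_eq, Set.mem_insert_iff, Set.mem_singleton_iff]
            constructor
            · rintro ⟨P, hP, rfl⟩
              rcases hWrange (Function.update Rhat j (Rbar j)) hQtdom P hP with h' | h' | h'
              · exact Or.inl h'
              · exact Or.inr h'
              · exact absurd h' (hno P hP)
            · rintro (rfl | rfl)
              · refine ⟨P'0, hsub' hP'0, ?_⟩
                rcases hVrange (Function.update Rhat j (Rbar j)) hQtdom P'0 hP'0 with h' | h'
                · exact h'
                · exact absurd h' (hno P'0 (hsub' hP'0))
              · exact ⟨Pyt, hPyt, hPyty⟩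
        obtain ⟨Pzt, hPzt, hPztz⟩ := hzQt
        have hQtPg : f (Function.update (Function.update Rhat j (Rbar j)) i Pg) = x := by
          rcases hVrange (Function.update Rhat j (Rbar j)) hQtdom Pg hPgm with h | h
          · exact h
          · exfalso
            rcases hmax (Function.update Rhat j (Rbar j)) hQtdom Pg (hsub' hPgm) Pyt hPyt with h' | h'
            · rw [h, hPyty] at h'; exact hzy h'
            · rw [h, hPyty] at h'; exact sto_asymm (sto_of_mem hNC' hPgm) hPgyz h'
        have hQtPh : f (Function.update (Function.update Rhat j (Rbar j)) i Ph) = z := by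
          rcases hVrange (Function.update Rhat j (Rbar j)) hQtdom Ph hPhm with h | h
          · exfalso
            rcases hmax (Function.update Rhat j (Rbar j)) hQtdom Ph (hsub' hPhm) Pzt hPzt with h' | h'
            · rw [h, hPztz] at h'; exact hxzne h'
            · rw [h, hPztz] at h'; exact sto_asymm (sto_of_mem hNC' hPhm) hPhzx h'
          · exact h
        have hrPh := hrev Rbar hRbar (Rbar j) hRbj (Rhat j) hRhj Ph (hsub' hPhm)
        rw [Function.update_eq_self, hQ0V Ph hPhm, hQ1Ph] at hrPh
        have hxzrev : Rbar j x z ∧ Rhat j z x := by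
          rcases hrPh with h | h
          · exact absurd h hxzne
          · exact h
        obtain ⟨Pd, hPd, hPdyz, hPdzx⟩ :=
          exists_mem_two (hNC i) hnei hyzne hzx (Ne.symm hxyne) hnF_zy hnF_xz hFixy
        have hPdyx := sto_trans (hstoi hPd) hPdyz hPdzx
        obtain ⟨Pe, hPe, hPeyx, hPexz⟩ :=
          exists_mem_two (hNC i) hnei (Ne.symm hxyne) hxzne hyzne hFixy hnF_zx hnF_zy
        have hPeyz := sto_trans (hstoi hPe) hPeyx hPexz
        have hQtPd : f (Function.update (Function.update Rhat j (Rbar j)) i Pd) = y := by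
          rcases hWrange (Function.update Rhat j (Rbar j)) hQtdom Pd hPd with h | h | h
          · exfalso
            rcases hmax (Function.update Rhat j (Rbar j)) hQtdom Pd hPd Pyt hPyt with h' | h'
            · rw [h, hPyty] at h'; exact hxyne h'
            · rw [h, hPyty] at h'; exact sto_asymm (hstoi hPd) hPdyx h'
          · exact h
          · exfalso
            rcases hmax (Function.update Rhat j (Rbar j)) hQtdom Pd hPd Pyt hPyt with h' | h'
            · rw [h, hPyty] at h'; exact hzy h'
            · rw [h, hPyty] at h'; exact sto_asymm (hstoi hPd) hPdyz h'
        have hQtPe : f (Function.update (Function.update Rhat j (Rbar j)) i Pe) = y := by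
          rcases hWrange (Function.update Rhat j (Rbar j)) hQtdom Pe hPe with h | h | h
          · exfalso
            rcases hmax (Function.update Rhat j (Rbar j)) hQtdom Pe hPe Pyt hPyt with h' | h'
            · rw [h, hPyty] at h'; exact hxyne h'
            · rw [h, hPyty] at h'; exact sto_asymm (hstoi hPe) hPeyx h'
          · exact h
          · exfalso
            rcases hmax (Function.update Rhat j (Rbar j)) hQtdom Pe hPe Pyt hPyt with h' | h'
            · rw [h, hPyty] at h'; exact hzy h'
            · rw [h, hPyty] at h'; exact sto_asymm (hstoi hPe) hPeyz h'
        have hQhPd : f (Function.update Rhat i Pd) = z := by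
          have hmem : f (Function.update Rhat i Pd) ∈ optionSet f i Rhat (𝓡 i) := ⟨Pd, hPd, rfl⟩
          rcases hb2 with hC | hC
          · rw [hC] at hmem; simpa using hmem
          · rw [hC] at hmem
            simp only [Set.mem_insert_iff, Set.mem_singleton_iff] at hmem
            rcases hmem with h | h
            · exfalso
              rcases hmax Rhat hRhat Pd hPd P'c (hsub' hP'c) with h' | h'
              · rw [h, hP'cz] at h'; exact hxzne h'
              · rw [h, hP'cz] at h'; exact sto_asymm (hstoi hPd) hPdzx h'
            · exact h
        rcases htg with ht | ht
        · -- τ = (x,y)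
          have hc1 : (z, x) ∉ fixedPairs (𝓡 j) :=
            fun h => sto_asymm (hstoj hRbj) hxzrev.1 (hresp_j hRbj h)
          have hc2 : (y, z) ∉ fixedPairs (𝓡 j) :=
            fun h => sto_asymm (hstoj hRhj) hyzrev.2 (hresp_j hRhj h)
          have hc3 : (y, x) ∉ fixedPairs (𝓡 j) := fun h => fix_asymm (hNC j) hnej ht h
          obtain ⟨Pr, hPr, hPrxz, hPrzy⟩ :=
            exists_mem_two (hNC j) hnej hxzne hzy hxyne hc1 hc2 hc3
          have hPrxy := sto_trans (hstoj hPr) hPrxz hPrzy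
          have hQr2dom : ∀ l, l ≠ i → (Function.update Rhat j Pr) l ∈ 𝓡 l := hupdom Rhat hRhat Pr hPr
          have hq1 : f (Function.update (Function.update Rhat j Pr) i Pd) = z := by
            have ha' : f (Function.update (Function.update Rhat j Pr) i Pd) = y ∨ f (Function.update (Function.update Rhat j Pr) i Pd) = z := by
              have hr := hrev Rhat hRhat (Rbar j) hRbj Pr hPr Pd hPd
              rw [hQtPd] at hr
              rcases hr with h | ⟨h1, h2⟩
              · exact Or.inl h.symm
              · rcases hWrange _ hQr2dom Pd hPd with h' | h' | h'
                · exfalso; rw [h'] at h1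
                  exact sto_asymm (hstoj hRbj) (hresp_j hRbj ht) h1
                · exact Or.inl h'
                · exact Or.inr h'
            have hb' : f (Function.update (Function.update Rhat j Pr) i Pd) = z ∨ f (Function.update (Function.update Rhat j Pr) i Pd) = x := by
              have hr := hrev Rhat hRhat (Rhat j) hRhj Pr hPr Pd hPd
              rw [Function.update_eq_self, hQhPd] at hr
              rcases hr with h | ⟨h1, h2⟩
              · exact Or.inl h.symm
              · rcases hWrange _ hQr2dom Pd hPd with h' | h' | h'
                · exact Or.inr h'
                · exfalso; rw [h'] at h2; exact sto_asymm (hstoj hPr) hPrzy h2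
                · exact Or.inl h'
            rcases ha' with h | h
            · rcases hb' with h' | h'
              · exact h'
              · exfalso; rw [h] at h'; exact hxyne h'.symm
            · exact h
          have hq2 : f (Function.update (Function.update Rhat j Pr) i Pe) = y ∨ f (Function.update (Function.update Rhat j Pr) i Pe) = z := by
            have hr := hrev Rhat hRhat (Rbar j) hRbj Pr hPr Pe hPe
            rw [hQtPe] at hr
            rcases hr with h | ⟨h1, h2⟩
            · exact Or.inl h.symm
            · rcases hWrange _ hQr2dom Pe hPe with h' | h' | h'
              · exfalso; rw [h'] at h1
                exact sto_asymm (hstoj hRbj) (hresp_j hRbj ht) h1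
              · exact Or.inl h'
              · exact Or.inr h'
          have hq4 : f (Function.update (Function.update Rhat j Pr) i Pe) = z := by
            rcases hq2 with h | h
            · exfalso
              rcases hmax _ hQr2dom Pd hPd Pe hPe with hh | hh
              · rw [hq1, h] at hh; exact hzy hh
              · rw [hq1, h] at hh; exact sto_asymm (hstoi hPd) hPdyz hh
            · exact h
          rcases hb2 with hC | hC
          · -- C = {z}
            have hc2x : f (Function.update (Function.update Rhat j Pr) i Pg) = x := by
              have hr := hrev Rhat hRhat (Rbar j) hRbj Pr hPr Pg (hsub' hPgm)
              rw [hQtPg] at hr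
              rcases hr with h | ⟨h1, h2⟩
              · exact h.symm
              · rcases hWrange _ hQr2dom Pg (hsub' hPgm) with h' | h' | h'
                · exact h'
                · exfalso; rw [h'] at h2; exact sto_asymm (hstoj hPr) hPrxy h2
                · exfalso; rw [h'] at h2; exact sto_asymm (hstoj hPr) hPrxz h2
            rcases hmax _ hQr2dom Pe hPe Pg (hsub' hPgm) with hh | hh
            · rw [hq4, hc2x] at hh; exact hzx hh
            · rw [hq4, hc2x] at hh; exact sto_asymm (hstoi hPe) hPexz hh
          · -- C = {x,z}
            have hxCm : x ∈ optionSet f i Rhat (𝓡 i) := by rw [hC]; exact Or.inl rfl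
            obtain ⟨Pcx, hPcx, hPcxx⟩ := hxCm
            have hQhPe : f (Function.update Rhat i Pe) = x := by
              have hmem : f (Function.update Rhat i Pe) ∈ optionSet f i Rhat (𝓡 i) := ⟨Pe, hPe, rfl⟩
              rw [hC] at hmem
              simp only [Set.mem_insert_iff, Set.mem_singleton_iff] at hmem
              rcases hmem with h | h
              · exact h
              · exfalso
                rcases hmax Rhat hRhat Pe hPe Pcx hPcx with h' | h'
                · rw [h, hPcxx] at h'; exact hzx h'
                · rw [h, hPcxx] at h'; exact sto_asymm (hstoi hPe) hPexz h'
            have hr := hrev Rhat hRhat (Rhat j) hRhj Pr hPr Pe hPe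
            rw [Function.update_eq_self, hQhPe] at hr
            rcases hr with h | ⟨h1, h2⟩
            · rw [hq4] at h; exact hxzne h
            · rcases hWrange _ hQr2dom Pe hPe with h' | h' | h'
              · exact hxzne (h'.symm.trans hq4)
              · rw [h'] at h2; exact sto_asymm (hstoj hPr) hPrxy h2
              · rw [h'] at h1; exact sto_asymm (hstoj hRhj) hxzrev.2 h1
        · -- τ = (y,x)
          have hc1 : (z, y) ∉ fixedPairs (𝓡 j) :=
            fun h => sto_asymm (hstoj hRbj) hyzrev.1 (hresp_j hRbj h)
          have hc2 : (x, z) ∉ fixedPairs (𝓡 j) :=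
            fun h => sto_asymm (hstoj hRhj) hxzrev.2 (hresp_j hRhj h)
          have hc3 : (x, y) ∉ fixedPairs (𝓡 j) := fun h => fix_asymm (hNC j) hnej h ht
          obtain ⟨Pr, hPr, hPryz, hPrzx⟩ :=
            exists_mem_two (hNC j) hnej hyzne hzx (Ne.symm hxyne) hc1 hc2 hc3
          have hPryx := sto_trans (hstoj hPr) hPryz hPrzx
          have hQb2dom : ∀ l, l ≠ i → (Function.update Rbar j Pr) l ∈ 𝓡 l := hupdom Rbar hRbar Pr hPr
          have hd1 : f (Function.update (Function.update Rbar j Pr) i Ph) = x ∨ f (Function.update (Function.update Rbar j Pr) i Ph) = z := by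
            have hr := hrev Rbar hRbar (Rbar j) hRbj Pr hPr Ph (hsub' hPhm)
            rw [Function.update_eq_self, hQ0V Ph hPhm] at hr
            rcases hr with h | ⟨h1, h2⟩
            · exact Or.inl h.symm
            · rcases hWrange _ hQb2dom Ph (hsub' hPhm) with h' | h' | h'
              · exact Or.inl h'
              · exfalso; rw [h'] at h1
                exact sto_asymm (hstoj hRbj) (hresp_j hRbj ht) h1
              · exact Or.inr h'
          have hd2 : f (Function.update (Function.update Rbar j Pr) i Ph) = z := by
            have hr := hrev Rbar hRbar (Rhat j) hRhj Pr hPr Ph (hsub' hPhm)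
            rw [hQ1Ph] at hr
            rcases hr with h | ⟨h1, h2⟩
            · exact h.symm
            · rcases hd1 with h' | h'
              · exfalso; rw [h'] at h2; exact sto_asymm (hstoj hPr) hPrzx h2
              · exact h'
          have hd3 : f (Function.update (Function.update Rbar j Pr) i Ps) = y := by
            have hr := hrev Rbar hRbar (Rbar j) hRbj Pr hPr Ps hPs
            rw [Function.update_eq_self, hQ0Ps] at hr
            rcases hr with h | ⟨h1, h2⟩
            · exact h.symm
            · exfalso
              rcases hWrange _ hQb2dom Ps hPs with h' | h' | h'
              · rw [h'] at h2; exact sto_asymm (hstoj hPr) hPryx h2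
              · rw [h'] at h2; exact (hstoj hPr).irrefl y h2
              · rw [h'] at h2; exact sto_asymm (hstoj hPr) hPryz h2
          rcases hmax _ hQb2dom Ps hPs Ph (hsub' hPhm) with hh | hh
          · rw [hd3, hd2] at hh; exact hyzne hh
          · rw [hd3, hd2] at hh; exact sto_asymm (hstoi hPs) hPszy hh
      · -- BRANCH I
        push_neg at hyQt
        have hQtx : ∀ P ∈ 𝓡 i, f (Function.update (Function.update Rhat j (Rbar j)) i P) = x := by
          by_cases hzQt : ∃ P ∈ 𝓡 i, f (Function.update (Function.update Rhat j (Rbar j)) i P) = z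
          · exfalso
            obtain ⟨Pzt, hPzt, hPztz⟩ := hzQt
            apply hM1
            have hQtPh : f (Function.update (Function.update Rhat j (Rbar j)) i Ph) = z := by
              rcases hVrange (Function.update Rhat j (Rbar j)) hQtdom Ph hPhm with h | h
              · exfalso
                rcases hmax (Function.update Rhat j (Rbar j)) hQtdom Ph (hsub' hPhm) Pzt hPzt with h' | h'
                · rw [h, hPztz] at h'; exact hxzne h'
                · rw [h, hPztz] at h'; exact sto_asymm (sto_of_mem hNC' hPhm) hPhzx h'
              · exact h
            by_cases hxQt : ∃ P ∈ 𝓡 i, f (Function.update (Function.update Rhat j (Rbar j)) i P) = x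
            · obtain ⟨Pxt, hPxt, hPxtx⟩ := hxQt
              have hQtPg : f (Function.update (Function.update Rhat j (Rbar j)) i Pg) = x := by
                rcases hVrange (Function.update Rhat j (Rbar j)) hQtdom Pg hPgm with h | h
                · exact h
                · exfalso
                  rcases hmax (Function.update Rhat j (Rbar j)) hQtdom Pg (hsub' hPgm) Pxt hPxt with h' | h'
                  · rw [h, hPxtx] at h'; exact hzx h'
                  · rw [h, hPxtx] at h'
                    exact sto_asymm (sto_of_mem hNC' hPgm) hPgxz h'
              constructor
              · ext a
                simp only [optionSet, Set.mem_setOf_eq]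
                constructor
                · rintro ⟨P', h1, rfl⟩; exact ⟨P', hsub' h1, rfl⟩
                · rintro ⟨P, hP, rfl⟩
                  rcases hWrange (Function.update Rhat j (Rbar j)) hQtdom P hP with h' | h' | h'
                  · exact ⟨Pg, hPgm, by rw [hQtPg, h']⟩
                  · exact absurd h' (hyQt P hP)
                  · exact ⟨Ph, hPhm, by rw [hQtPh, h']⟩
              · right
                ext a
                simp only [optionSet, Set.mem_setOf_eq, Set.mem_insert_iff,
                  Set.mem_singleton_iff]
                constructor
                · rintro ⟨P, hP, rfl⟩
                  rcases hWrange (Function.update Rhat j (Rbar j)) hQtdom P hP with h' | h' | h'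
                  · exact Or.inl h'
                  · exact absurd h' (hyQt P hP)
                  · exact Or.inr h'
                · rintro (rfl | rfl)
                  · exact ⟨Pxt, hPxt, hPxtx⟩
                  · exact ⟨Pzt, hPzt, hPztz⟩
            · push_neg at hxQt
              constructor
              · ext a
                simp only [optionSet, Set.mem_setOf_eq]
                constructor
                · rintro ⟨P', h1, rfl⟩; exact ⟨P', hsub' h1, rfl⟩
                · rintro ⟨P, hP, rfl⟩
                  rcases hWrange (Function.update Rhat j (Rbar j)) hQtdom P hP with h' | h' | h'
                  · exact absurd h' (hxQt P hP)
                  · exact absurd h' (hyQt P hP)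
                  · exact ⟨Ph, hPhm, by rw [hQtPh, h']⟩
              · left
                ext a
                simp only [optionSet, Set.mem_setOf_eq, Set.mem_singleton_iff]
                constructor
                · rintro ⟨P, hP, rfl⟩
                  rcases hWrange (Function.update Rhat j (Rbar j)) hQtdom P hP with h' | h' | h'
                  · exact absurd h' (hxQt P hP)
                  · exact absurd h' (hyQt P hP)
                  · exact h'
                · rintro rfl; exact ⟨Pzt, hPzt, hPztz⟩
          · push_neg at hzQt
            intro P hP
            rcases hWrange (Function.update Rhat j (Rbar j)) hQtdom P hP with h | h | h
            · exact h
            · exact absurd h (hyQt P hP)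
            · exact absurd h (hzQt P hP)
        have hrc := hrev Rhat hRhat (Rbar j) hRbj (Rhat j) hRhj P'c (hsub' hP'c)
        rw [Function.update_eq_self, hQtx P'c (hsub' hP'c), hP'cz] at hrc
        have hxzrev : Rbar j x z ∧ Rhat j z x := by
          rcases hrc with h | h
          · exact absurd h hxzne
          · exact h
        rcases htg with ht | ht
        · -- τ = (x,y)
          have hc1 : (z, x) ∉ fixedPairs (𝓡 j) :=
            fun h => sto_asymm (hstoj hRbj) hxzrev.1 (hresp_j hRbj h)
          have hc2 : (y, z) ∉ fixedPairs (𝓡 j) :=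
            fun h => sto_asymm (hstoj hRhj) hyzrev.2 (hresp_j hRhj h)
          have hc3 : (y, x) ∉ fixedPairs (𝓡 j) := fun h => fix_asymm (hNC j) hnej ht h
          obtain ⟨Pr, hPr, hPrxz, hPrzy⟩ :=
            exists_mem_two (hNC j) hnej hxzne hzy hxyne hc1 hc2 hc3
          have hPrxy := sto_trans (hstoj hPr) hPrxz hPrzy
          have hQb2dom : ∀ l, l ≠ i → (Function.update Rbar j Pr) l ∈ 𝓡 l := hupdom Rbar hRbar Pr hPr
          have hg1 : f (Function.update (Function.update Rbar j Pr) i Ph) = x := by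
            have hr := hrev Rbar hRbar (Rbar j) hRbj Pr hPr Ph (hsub' hPhm)
            rw [Function.update_eq_self, hQ0V Ph hPhm] at hr
            rcases hr with h | ⟨h1, h2⟩
            · exact h.symm
            · exfalso
              rcases hWrange _ hQb2dom Ph (hsub' hPhm) with h' | h' | h'
              · rw [h'] at h2; exact (hstoj hPr).irrefl x h2
              · rw [h'] at h2; exact sto_asymm (hstoj hPr) hPrxy h2
              · rw [h'] at h2; exact sto_asymm (hstoj hPr) hPrxz h2
          have hg2 : f (Function.update (Function.update Rbar j Pr) i Ps) = z ∨ f (Function.update (Function.update Rbar j Pr) i Ps) = x := by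
            have hr := hrev Rbar hRbar (Rhat j) hRhj Pr hPr Ps hPs
            rw [hQ1Ps] at hr
            rcases hr with h | ⟨h1, h2⟩
            · exact Or.inl h.symm
            · rcases hWrange _ hQb2dom Ps hPs with h' | h' | h'
              · exact Or.inr h'
              · exfalso; rw [h'] at h2; exact sto_asymm (hstoj hPr) hPrzy h2
              · exact Or.inl h'
          have hg3 : f (Function.update (Function.update Rbar j Pr) i Ps) = z := by
            have hr := hrev Rbar hRbar (Rbar j) hRbj Pr hPr Ps hPs
            rw [Function.update_eq_self, hQ0Ps] at hr
            rcases hr with h | ⟨h1, h2⟩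
            · exfalso
              rcases hg2 with h' | h'
              · rw [← h] at h'; exact hyzne h'
              · rw [← h] at h'; exact hxyne h'.symm
            · rcases hg2 with h' | h'
              · exact h'
              · exfalso; rw [h'] at h1
                exact sto_asymm (hstoj hRbj) (hresp_j hRbj ht) h1
          rcases hmax _ hQb2dom Ph (hsub' hPhm) Ps hPs with hh | hh
          · rw [hg1, hg3] at hh; exact hxzne hh
          · rw [hg1, hg3] at hh; exact sto_asymm (sto_of_mem hNC' hPhm) hPhzx hh
        · -- τ = (y,x)
          have hc1 : (z, y) ∉ fixedPairs (𝓡 j) :=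
            fun h => sto_asymm (hstoj hRbj) hyzrev.1 (hresp_j hRbj h)
          have hc2 : (x, z) ∉ fixedPairs (𝓡 j) :=
            fun h => sto_asymm (hstoj hRhj) hxzrev.2 (hresp_j hRhj h)
          have hc3 : (x, y) ∉ fixedPairs (𝓡 j) := fun h => fix_asymm (hNC j) hnej h ht
          obtain ⟨Pr, hPr, hPryz, hPrzx⟩ :=
            exists_mem_two (hNC j) hnej hyzne hzx (Ne.symm hxyne) hc1 hc2 hc3
          have hPryx := sto_trans (hstoj hPr) hPryz hPrzx
          have hQb2dom : ∀ l, l ≠ i → (Function.update Rbar j Pr) l ∈ 𝓡 l := hupdom Rbar hRbar Pr hPr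
          have hh1 : f (Function.update (Function.update Rbar j Pr) i Ph) = x ∨ f (Function.update (Function.update Rbar j Pr) i Ph) = z := by
            have hr := hrev Rbar hRbar (Rbar j) hRbj Pr hPr Ph (hsub' hPhm)
            rw [Function.update_eq_self, hQ0V Ph hPhm] at hr
            rcases hr with h | ⟨h1, h2⟩
            · exact Or.inl h.symm
            · rcases hWrange _ hQb2dom Ph (hsub' hPhm) with h' | h' | h'
              · exact Or.inl h'
              · exfalso; rw [h'] at h1
                exact sto_asymm (hstoj hRbj) (hresp_j hRbj ht) h1
              · exact Or.inr h'
          have hh2 : f (Function.update (Function.update Rbar j Pr) i Ph) = z := by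
            have hr := hrev Rbar hRbar (Rhat j) hRhj Pr hPr Ph (hsub' hPhm)
            rw [hQ1Ph] at hr
            rcases hr with h | ⟨h1, h2⟩
            · exact h.symm
            · rcases hh1 with h' | h'
              · exfalso; rw [h'] at h2; exact sto_asymm (hstoj hPr) hPrzx h2
              · exact h'
          have hh3 : f (Function.update (Function.update Rbar j Pr) i Ps) = y := by
            have hr := hrev Rbar hRbar (Rbar j) hRbj Pr hPr Ps hPs
            rw [Function.update_eq_self, hQ0Ps] at hr
            rcases hr with h | ⟨h1, h2⟩
            · exact h.symm
            · exfalso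
              rcases hWrange _ hQb2dom Ps hPs with h' | h' | h'
              · rw [h'] at h2; exact sto_asymm (hstoj hPr) hPryx h2
              · rw [h'] at h2; exact (hstoj hPr).irrefl y h2
              · rw [h'] at h2; exact sto_asymm (hstoj hPr) hPryz h2
          rcases hmax _ hQb2dom Ps hPs Ph (hsub' hPhm) with hh | hh
          · rw [hh3, hh2] at hh; exact hyzne hh
          · rw [hh3, hh2] at hh; exact sto_asymm (hstoi hPs) hPszy hh

    case pos =>
      have hoff : ∀ l, l ≠ i → l ≠ j → Rbar l = Rhat l := by
        intro l hl hlj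
        apply hd l hl
        rw [hD1]
        simpa using hlj
      have hQ1eq : ∀ P : Pref X, f (Function.update (Function.update Rbar j (Rhat j)) i P) = f (Function.update Rhat i P) := by
        intro P
        apply hcongr
        intro l hl
        rcases eq_or_ne l j with rfl | hlj
        · simp
        · rw [Function.update_of_ne hlj]; exact hoff l hl hlj
      have hkey : ∀ P ∈ 𝓡 i, P y x → f (Function.update Rhat i P) = z := by
        intro P hP hyx
        have hr := hrev Rbar hRbar (Rbar j) hRbj (Rhat j) hRhj P hP
        rw [Function.update_eq_self, hQ0y P hP hyx, hQ1eq P] at hr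
        have hmem : f (Function.update Rhat i P) ∈ optionSet f i Rhat (𝓡 i) := ⟨P, hP, rfl⟩
        rcases hb2 with hC | hC
        · rw [hC] at hmem; simpa using hmem
        · rw [hC] at hmem
          simp only [Set.mem_insert_iff, Set.mem_singleton_iff] at hmem
          rcases hmem with h | h
          · exfalso
            rcases hr with h' | ⟨h1, h2⟩
            · rw [h] at h'; exact hxyne h'.symm
            · rw [h] at h1 h2; exact htcon h1 h2
          · exact h
      have hQhP1 : f (Function.update Rhat i P1) = z := hkey P1 hP1 hP1yx
      have hyzrev : Rbar j y z ∧ Rhat j z y := by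
        have hr := hrev Rbar hRbar (Rbar j) hRbj (Rhat j) hRhj P1 hP1
        rw [Function.update_eq_self, hQ0y P1 hP1 hP1yx, hQ1eq P1, hQhP1] at hr
        rcases hr with h | h
        · exact absurd h hyzne
        · exact h
      rcases hb2 with hC | hC
      · -- C = {z}
        have hallz : ∀ P ∈ 𝓡 i, f (Function.update Rhat i P) = z := by
          intro P hP
          have hmem : f (Function.update Rhat i P) ∈ optionSet f i Rhat (𝓡 i) := ⟨P, hP, rfl⟩
          rw [hC] at hmem; simpa using hmem
        have hxzrev : Rbar j x z ∧ Rhat j z x := by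
          have hr := hrev Rbar hRbar (Rbar j) hRbj (Rhat j) hRhj P'0 (hsub' hP'0)
          rw [Function.update_eq_self, hP'0x, hQ1eq P'0, hallz P'0 (hsub' hP'0)] at hr
          rcases hr with h | h
          · exact absurd h hxzne
          · exact h
        rcases htg with ht | ht
        · -- τ = (x,y)
          have hc1 : (z, x) ∉ fixedPairs (𝓡 j) :=
            fun h => sto_asymm (hstoj hRbj) hxzrev.1 (hresp_j hRbj h)
          have hc2 : (y, z) ∉ fixedPairs (𝓡 j) :=
            fun h => sto_asymm (hstoj hRhj) hyzrev.2 (hresp_j hRhj h)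
          have hc3 : (y, x) ∉ fixedPairs (𝓡 j) := fun h => fix_asymm (hNC j) hnej ht h
          obtain ⟨Pr, hPr, hPrxz, hPrzy⟩ :=
            exists_mem_two (hNC j) hnej hxzne hzy hxyne hc1 hc2 hc3
          have hPrxy := sto_trans (hstoj hPr) hPrxz hPrzy
          have hQb2dom : ∀ l, l ≠ i → (Function.update Rbar j Pr) l ∈ 𝓡 l := hupdom Rbar hRbar Pr hPr
          have hk1 : ∀ P' ∈ 𝓡' i, f (Function.update (Function.update Rbar j Pr) i P') = x := by
            intro P' hP'
            have hr := hrev Rbar hRbar (Rbar j) hRbj Pr hPr P' (hsub' hP')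
            rw [Function.update_eq_self, hQ0V P' hP'] at hr
            rcases hr with h | ⟨h1, h2⟩
            · exact h.symm
            · exfalso
              rcases hWrange _ hQb2dom P' (hsub' hP') with h' | h' | h'
              · rw [h'] at h2; exact (hstoj hPr).irrefl x h2
              · rw [h'] at h2; exact sto_asymm (hstoj hPr) hPrxy h2
              · rw [h'] at h2; exact sto_asymm (hstoj hPr) hPrxz h2
          have hk2 : ∀ P ∈ 𝓡 i, f (Function.update (Function.update Rbar j Pr) i P) = z ∨ f (Function.update (Function.update Rbar j Pr) i P) = x := by
            intro P hP
            have hr := hrev Rbar hRbar (Rhat j) hRhj Pr hPr P hP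
            rw [hQ1eq P, hallz P hP] at hr
            rcases hr with h | ⟨h1, h2⟩
            · exact Or.inl h.symm
            · rcases hWrange _ hQb2dom P hP with h' | h' | h'
              · exact Or.inr h'
              · exfalso; rw [h'] at h2; exact sto_asymm (hstoj hPr) hPrzy h2
              · exact Or.inl h'
          have hk3 : ∀ P ∈ 𝓡 i, P y x → f (Function.update (Function.update Rbar j Pr) i P) = z := by
            intro P hP hyx
            have hr := hrev Rbar hRbar (Rbar j) hRbj Pr hPr P hP
            rw [Function.update_eq_self, hQ0y P hP hyx] at hr
            rcases hr with h | ⟨h1, h2⟩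
            · exfalso
              rcases hk2 P hP with h' | h'
              · rw [← h] at h'; exact hyzne h'
              · rw [← h] at h'; exact hxyne h'.symm
            · rcases hk2 P hP with h' | h'
              · exact h'
              · exfalso; rw [h'] at h1
                exact sto_asymm (hstoj hRbj) (hresp_j hRbj ht) h1
          by_cases hxzF : (x, z) ∈ fixedPairs (𝓡' i)
          · have hF := hfix_of' _ hxzF (fun hh => hzy (congrArg Prod.snd hh))
            rcases hmax _ hQb2dom P1 hP1 P'0 (hsub' hP'0) with hh | hh
            · rw [hk3 P1 hP1 hP1yx, hk1 P'0 hP'0] at hh; exact hzx hh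
            · rw [hk3 P1 hP1 hP1yx, hk1 P'0 hP'0] at hh
              exact sto_asymm (hstoi hP1) (hresp_i hP1 hF) hh
          · obtain ⟨P'z, hP'zm, hP'zzx⟩ := exists_mem_one hNC' hne' hzx hxzF
            rcases hmax _ hQb2dom P'z (hsub' hP'zm) P1 hP1 with hh | hh
            · rw [hk1 P'z hP'zm, hk3 P1 hP1 hP1yx] at hh; exact hxzne hh
            · rw [hk1 P'z hP'zm, hk3 P1 hP1 hP1yx] at hh
              exact sto_asymm (sto_of_mem hNC' hP'zm) hP'zzx hh
        · -- τ = (y,x)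
          have hc1 : (z, y) ∉ fixedPairs (𝓡 j) :=
            fun h => sto_asymm (hstoj hRbj) hyzrev.1 (hresp_j hRbj h)
          have hc2 : (x, z) ∉ fixedPairs (𝓡 j) :=
            fun h => sto_asymm (hstoj hRhj) hxzrev.2 (hresp_j hRhj h)
          have hc3 : (x, y) ∉ fixedPairs (𝓡 j) := fun h => fix_asymm (hNC j) hnej h ht
          obtain ⟨Pr, hPr, hPryz, hPrzx⟩ :=
            exists_mem_two (hNC j) hnej hyzne hzx (Ne.symm hxyne) hc1 hc2 hc3
          have hPryx := sto_trans (hstoj hPr) hPryz hPrzx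
          have hQb2dom : ∀ l, l ≠ i → (Function.update Rbar j Pr) l ∈ 𝓡 l := hupdom Rbar hRbar Pr hPr
          have hl1 : ∀ P ∈ 𝓡 i, f (Function.update (Function.update Rbar j Pr) i P) = z ∨ f (Function.update (Function.update Rbar j Pr) i P) = y := by
            intro P hP
            have hr := hrev Rbar hRbar (Rhat j) hRhj Pr hPr P hP
            rw [hQ1eq P, hallz P hP] at hr
            rcases hr with h | ⟨h1, h2⟩
            · exact Or.inl h.symm
            · rcases hWrange _ hQb2dom P hP with h' | h' | h'
              · exfalso; rw [h'] at h2; exact sto_asymm (hstoj hPr) hPrzx h2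
              · exact Or.inr h'
              · exact Or.inl h'
          have hl2 : ∀ P' ∈ 𝓡' i, f (Function.update (Function.update Rbar j Pr) i P') = z := by
            intro P' hP'
            have hr := hrev Rbar hRbar (Rbar j) hRbj Pr hPr P' (hsub' hP')
            rw [Function.update_eq_self, hQ0V P' hP'] at hr
            rcases hr with h | ⟨h1, h2⟩
            · exfalso
              rcases hl1 P' (hsub' hP') with h' | h'
              · rw [← h] at h'; exact hxzne h'
              · rw [← h] at h'; exact hxyne h'
            · rcases hl1 P' (hsub' hP') with h' | h'
              · exact h'
              · exfalso; rw [h'] at h1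
                exact sto_asymm (hstoj hRbj) (hresp_j hRbj ht) h1
          have hl3 : ∀ P ∈ 𝓡 i, P y x → f (Function.update (Function.update Rbar j Pr) i P) = y := by
            intro P hP hyx
            have hr := hrev Rbar hRbar (Rbar j) hRbj Pr hPr P hP
            rw [Function.update_eq_self, hQ0y P hP hyx] at hr
            rcases hr with h | ⟨h1, h2⟩
            · exact h.symm
            · exfalso
              rcases hWrange _ hQb2dom P hP with h' | h' | h'
              · rw [h'] at h2; exact sto_asymm (hstoj hPr) hPryx h2
              · rw [h'] at h2; exact (hstoj hPr).irrefl y h2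
              · rw [h'] at h2; exact sto_asymm (hstoj hPr) hPryz h2
          by_cases hyzF : (y, z) ∈ fixedPairs (𝓡 i)
          · rcases hmax _ hQb2dom P'0 (hsub' hP'0) P1 hP1 with hh | hh
            · rw [hl2 P'0 hP'0, hl3 P1 hP1 hP1yx] at hh; exact hzy hh
            · rw [hl2 P'0 hP'0, hl3 P1 hP1 hP1yx] at hh
              exact sto_asymm (hstoi (hsub' hP'0)) (hresp_i (hsub' hP'0) hyzF) hh
          · by_cases hxzF : (x, z) ∈ fixedPairs (𝓡 i)
            · by_cases hzyF : (z, y) ∈ fixedPairs (𝓡' i)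
              · exact hFixy (fix_trans (hNC i) hnei hxzF
                  (hfix_of' _ hzyF (fun hh => hzx (congrArg Prod.fst hh))))
              · obtain ⟨Pyz', hm, hyz'⟩ := exists_mem_one hNC' hne' hyzne hzyF
                rcases hmax _ hQb2dom Pyz' (hsub' hm) P1 hP1 with hh | hh
                · rw [hl2 Pyz' hm, hl3 P1 hP1 hP1yx] at hh; exact hzy hh
                · rw [hl2 Pyz' hm, hl3 P1 hP1 hP1yx] at hh
                  exact sto_asymm (sto_of_mem hNC' hm) hyz' hh
            · obtain ⟨P2, hP2, hP2zy, hP2yx⟩ :=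
                exists_mem_two (hNC i) hnei hzy (Ne.symm hxyne) hzx hyzF hFixy hxzF
              rcases hmax _ hQb2dom P2 hP2 P'0 (hsub' hP'0) with hh | hh
              · rw [hl3 P2 hP2 hP2yx, hl2 P'0 hP'0] at hh; exact hyzne hh
              · rw [hl3 P2 hP2 hP2yx, hl2 P'0 hP'0] at hh
                exact sto_asymm (hstoi hP2) hP2zy hh
      · -- C = {x,z}
        have hxCm : x ∈ optionSet f i Rhat (𝓡 i) := by rw [hC]; exact Or.inl rfl
        obtain ⟨Pcx, hPcx, hPcxx⟩ := hxCm
        have hP'czx : P'c z x := by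
          rcases hmax Rhat hRhat P'c (hsub' hP'c) Pcx hPcx with h | h
          · rw [hP'cz, hPcxx] at h; exact absurd h.symm hxzne
          · rwa [hP'cz, hPcxx] at h
        have hnfix_xz : (x, z) ∉ fixedPairs (𝓡' i) := fun hfix =>
          sto_asymm (sto_of_mem hNC' hP'c) hP'czx (hfix.2 P'c hP'c)
        have hnF_zx : (z, x) ∉ fixedPairs (𝓡 i) := by
          intro hF
          have hzx' : Pcx z x := hresp_i hPcx hF
          rcases hmax Rhat hRhat Pcx hPcx P'c (hsub' hP'c) with h | h
          · rw [hPcxx, hP'cz] at h; exact hxzne h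
          · rw [hPcxx, hP'cz] at h; exact sto_asymm (hstoi hPcx) h hzx'
        have hxzrev : Rbar j x z ∧ Rhat j z x := by
          have hr := hrev Rbar hRbar (Rbar j) hRbj (Rhat j) hRhj P'c (hsub' hP'c)
          rw [Function.update_eq_self, hQ0V P'c hP'c, hQ1eq P'c, hP'cz] at hr
          rcases hr with h | h
          · exact absurd h hxzne
          · exact h
        have hzyF : (z, y) ∈ fixedPairs (𝓡 i) := by
          by_contra hzyF
          obtain ⟨Pe, hPe, hPeyx, hPexz⟩ :=
            exists_mem_two (hNC i) hnei (Ne.symm hxyne) hxzne hyzne hFixy hnF_zx hzyF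
          have h1 := hkey Pe hPe hPeyx
          rcases hmax Rhat hRhat Pe hPe Pcx hPcx with hh | hh
          · rw [h1, hPcxx] at hh; exact hzx hh
          · rw [h1, hPcxx] at hh; exact sto_asymm (hstoi hPe) hPexz hh
        have hnF_yz : (y, z) ∉ fixedPairs (𝓡 i) := fun h => fix_asymm (hNC i) hnei hzyF h
        have hnF_xz : (x, z) ∉ fixedPairs (𝓡 i) := fun h => hnfix_xz (hfix_sub h)
        obtain ⟨P2, hP2, hP2zy, hP2yx⟩ :=
          exists_mem_two (hNC i) hnei hzy (Ne.symm hxyne) hzx hnF_yz hFixy hnF_xz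
        have hQ0P2 : f (Function.update Rbar i P2) = y := hQ0y P2 hP2 hP2yx
        have hQhP2 : f (Function.update Rhat i P2) = z := hkey P2 hP2 hP2yx
        rcases htg with ht | ht
        · -- τ = (x,y)
          have hc1 : (z, x) ∉ fixedPairs (𝓡 j) :=
            fun h => sto_asymm (hstoj hRbj) hxzrev.1 (hresp_j hRbj h)
          have hc2 : (y, z) ∉ fixedPairs (𝓡 j) :=
            fun h => sto_asymm (hstoj hRhj) hyzrev.2 (hresp_j hRhj h)
          have hc3 : (y, x) ∉ fixedPairs (𝓡 j) := fun h => fix_asymm (hNC j) hnej ht h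
          obtain ⟨Pr, hPr, hPrxz, hPrzy⟩ :=
            exists_mem_two (hNC j) hnej hxzne hzy hxyne hc1 hc2 hc3
          have hPrxy := sto_trans (hstoj hPr) hPrxz hPrzy
          have hQb2dom : ∀ l, l ≠ i → (Function.update Rbar j Pr) l ∈ 𝓡 l := hupdom Rbar hRbar Pr hPr
          have hi2 : f (Function.update (Function.update Rbar j Pr) i P'c) = x := by
            have hr := hrev Rbar hRbar (Rbar j) hRbj Pr hPr P'c (hsub' hP'c)
            rw [Function.update_eq_self, hQ0V P'c hP'c] at hr
            rcases hr with h | ⟨h1, h2⟩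
            · exact h.symm
            · exfalso
              rcases hWrange _ hQb2dom P'c (hsub' hP'c) with h' | h' | h'
              · rw [h'] at h2; exact (hstoj hPr).irrefl x h2
              · rw [h'] at h2; exact sto_asymm (hstoj hPr) hPrxy h2
              · rw [h'] at h2; exact sto_asymm (hstoj hPr) hPrxz h2
          have hi3 : f (Function.update (Function.update Rbar j Pr) i P2) = z := by
            have ha' : f (Function.update (Function.update Rbar j Pr) i P2) = z ∨ f (Function.update (Function.update Rbar j Pr) i P2) = x := by
              have hr := hrev Rbar hRbar (Rhat j) hRhj Pr hPr P2 hP2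
              rw [hQ1eq P2, hQhP2] at hr
              rcases hr with h | ⟨h1, h2⟩
              · exact Or.inl h.symm
              · rcases hWrange _ hQb2dom P2 hP2 with h' | h' | h'
                · exact Or.inr h'
                · exfalso; rw [h'] at h2; exact sto_asymm (hstoj hPr) hPrzy h2
                · exact Or.inl h'
            have hb'' : f (Function.update (Function.update Rbar j Pr) i P2) = y ∨ f (Function.update (Function.update Rbar j Pr) i P2) = z := by
              have hr := hrev Rbar hRbar (Rbar j) hRbj Pr hPr P2 hP2
              rw [Function.update_eq_self, hQ0P2] at hr
              rcases hr with h | ⟨h1, h2⟩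
              · exact Or.inl h.symm
              · rcases hWrange _ hQb2dom P2 hP2 with h' | h' | h'
                · exfalso; rw [h'] at h1
                  exact sto_asymm (hstoj hRbj) (hresp_j hRbj ht) h1
                · exact Or.inl h'
                · exact Or.inr h'
            rcases ha' with h | h
            · exact h
            · rcases hb'' with h' | h'
              · exfalso; rw [h] at h'; exact hxyne h'
              · exact h'
          rcases hmax _ hQb2dom P'c (hsub' hP'c) P2 hP2 with hh | hh
          · rw [hi2, hi3] at hh; exact hxzne hh
          · rw [hi2, hi3] at hh; exact sto_asymm (sto_of_mem hNC' hP'c) hP'czx hh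
        · -- τ = (y,x)
          have hc1 : (z, y) ∉ fixedPairs (𝓡 j) :=
            fun h => sto_asymm (hstoj hRbj) hyzrev.1 (hresp_j hRbj h)
          have hc2 : (x, z) ∉ fixedPairs (𝓡 j) :=
            fun h => sto_asymm (hstoj hRhj) hxzrev.2 (hresp_j hRhj h)
          have hc3 : (x, y) ∉ fixedPairs (𝓡 j) := fun h => fix_asymm (hNC j) hnej h ht
          obtain ⟨Pr, hPr, hPryz, hPrzx⟩ :=
            exists_mem_two (hNC j) hnej hyzne hzx (Ne.symm hxyne) hc1 hc2 hc3
          have hPryx := sto_trans (hstoj hPr) hPryz hPrzx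
          have hQb2dom : ∀ l, l ≠ i → (Function.update Rbar j Pr) l ∈ 𝓡 l := hupdom Rbar hRbar Pr hPr
          have hj12 : f (Function.update (Function.update Rbar j Pr) i P'c) = z := by
            have ha' : f (Function.update (Function.update Rbar j Pr) i P'c) = x ∨ f (Function.update (Function.update Rbar j Pr) i P'c) = z := by
              have hr := hrev Rbar hRbar (Rbar j) hRbj Pr hPr P'c (hsub' hP'c)
              rw [Function.update_eq_self, hQ0V P'c hP'c] at hr
              rcases hr with h | ⟨h1, h2⟩
              · exact Or.inl h.symm
              · rcases hWrange _ hQb2dom P'c (hsub' hP'c) with h' | h' | h'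
                · exact Or.inl h'
                · exfalso; rw [h'] at h1
                  exact sto_asymm (hstoj hRbj) (hresp_j hRbj ht) h1
                · exact Or.inr h'
            have hb'' : f (Function.update (Function.update Rbar j Pr) i P'c) = z ∨ f (Function.update (Function.update Rbar j Pr) i P'c) = y := by
              have hr := hrev Rbar hRbar (Rhat j) hRhj Pr hPr P'c (hsub' hP'c)
              rw [hQ1eq P'c, hP'cz] at hr
              rcases hr with h | ⟨h1, h2⟩
              · exact Or.inl h.symm
              · rcases hWrange _ hQb2dom P'c (hsub' hP'c) with h' | h' | h'
                · exfalso; rw [h'] at h2; exact sto_asymm (hstoj hPr) hPrzx h2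
                · exact Or.inr h'
                · exact Or.inl h'
            rcases ha' with h | h
            · rcases hb'' with h' | h'
              · exact h'
              · exfalso; rw [h] at h'; exact hxyne h'
            · exact h
          have hj3 : f (Function.update (Function.update Rbar j Pr) i P2) = y := by
            have hr := hrev Rbar hRbar (Rbar j) hRbj Pr hPr P2 hP2
            rw [Function.update_eq_self, hQ0P2] at hr
            rcases hr with h | ⟨h1, h2⟩
            · exact h.symm
            · exfalso
              rcases hWrange _ hQb2dom P2 hP2 with h' | h' | h'
              · rw [h'] at h2; exact sto_asymm (hstoj hPr) hPryx h2
              · rw [h'] at h2; exact (hstoj hPr).irrefl y h2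
              · rw [h'] at h2; exact sto_asymm (hstoj hPr) hPryz h2
          rcases hmax _ hQb2dom P2 hP2 P'c (hsub' hP'c) with hh | hh
          · rw [hj3, hj12] at hh; exact hyzne hh
          · rw [hj3, hj12] at hh; exact sto_asymm (hstoi hP2) hP2zy hh

  exact ⟨hFPxy, hFPxz⟩
end

section
/- If 𝓡_j is a non-conditional preference domain and R, R' ∈ 𝓡_j, then there exists a finite sequence of preferences R = R^1, R^2, …, R^n = R', all belonging to 𝓡_j, such that for each l ∈ {1, …, n−1} the preferences R^l and R^{l+1} differ in the ordering of exactly one pair of distinct alternatives (i.e., there is exactly one unordered pair {v, w} with v P^l w and w P^{l+1} v, and R^l and R^{l+1} agree on all other pairs). -/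
/-- Two preferences are adjacent: they differ in the ordering of exactly one
unordered pair of distinct alternatives and agree on every other pair. -/
def AdjacentOne {X : Type*} (P P' : Pref X) : Prop :=
  ∃ v w, v ≠ w ∧ P v w ∧ P' w v ∧
    ∀ s t, s ≠ t → ({s, t} : Set X) ≠ {v, w} → (P s t ↔ P' s t)

section Aux

variable {X : Type*}

open Classical in
/-- Swap the adjacent pair `(a,b)` (with `P a b`) in the order `P`. -/
noncomputable def swapPref (P : Pref X) (a b : X) : Pref X :=
  fun s t => if s = b ∧ t = a then True else if s = a ∧ t = b then False else P s t

theorem swapPref_iff (P : Pref X) (a b s t : X) :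
    swapPref P a b s t ↔ (s = b ∧ t = a) ∨ (P s t ∧ ¬(s = a ∧ t = b)) := by
  unfold swapPref
  by_cases h1 : s = b ∧ t = a <;> by_cases h2 : s = a ∧ t = b <;> simp [h1, h2]

theorem swapPref_sto {X : Type*} (P : Pref X) (hP : IsStrictTotalOrder X P) (a b : X)
    (hab : P a b) (hadj : ∀ z, ¬(P a z ∧ P z b)) :
    IsStrictTotalOrder X (swapPref P a b) := by
  have hne : a ≠ b := fun h => hP.irrefl a (h ▸ hab)
  have key1 : ∀ z, z ≠ b → P a z → P b z := by
    intro z hzb haz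
    rcases (haveI := hP; trichotomous (r := P) b z) with h | h | h
    · exact h
    · exact absurd h.symm hzb
    · exact absurd ⟨haz, h⟩ (hadj z)
  have key2 : ∀ z, z ≠ a → P z b → P z a := by
    intro z hza hzb
    rcases (haveI := hP; trichotomous (r := P) z a) with h | h | h
    · exact h
    · exact absurd h hza
    · exact absurd ⟨h, hzb⟩ (hadj z)
  have htri : ∀ s t : X, swapPref P a b s t ∨ s = t ∨ swapPref P a b t s := by
    intro s t
    rw [swapPref_iff, swapPref_iff]
    by_cases h1 : s = a ∧ t = b
    · exact Or.inr (Or.inr (Or.inl ⟨h1.2, h1.1⟩))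
    by_cases h2 : s = b ∧ t = a
    · exact Or.inl (Or.inl ⟨h2.1, h2.2⟩)
    rcases (haveI := hP; trichotomous (r := P) s t) with h | h | h
    · exact Or.inl (Or.inr ⟨h, h1⟩)
    · exact Or.inr (Or.inl h)
    · refine Or.inr (Or.inr (Or.inr ⟨h, fun hc => ?_⟩))
      exact h2 ⟨hc.2, hc.1⟩
  have hirr : ∀ s : X, ¬ swapPref P a b s s := by
    intro s hs
    rw [swapPref_iff] at hs
    rcases hs with ⟨h1, h2⟩ | ⟨h, _⟩
    · exact hne (h2.symm.trans h1)
    · exact hP.irrefl s h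
  have htrans : ∀ s t u : X, swapPref P a b s t → swapPref P a b t u → swapPref P a b s u := by
    intro s t u hst htu
    rw [swapPref_iff] at hst htu ⊢
    rcases hst with ⟨hsb, hta⟩ | ⟨hst, hns⟩
    · rcases htu with ⟨htb, hua⟩ | ⟨htu, hnu⟩
      · exact absurd (hta.symm.trans htb) hne
      · rw [hta] at htu
        have hub : u ≠ b := fun h => hnu ⟨hta, h⟩
        refine Or.inr ⟨?_, fun hc => hne (hc.1.symm.trans hsb)⟩
        rw [hsb]
        exact key1 u hub htu
    · rcases htu with ⟨htb, hua⟩ | ⟨htu, hnt⟩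
      · rw [htb] at hst
        have hsa : s ≠ a := fun h => hns ⟨h, htb⟩
        by_cases hsb' : s = b
        · exact Or.inl ⟨hsb', hua⟩
        · refine Or.inr ⟨?_, fun hc => hsa hc.1⟩
          rw [hua]
          exact key2 s hsa hst
      · have hsu := hP.trans _ _ _ hst htu
        by_cases hsb : s = b ∧ u = a
        · exact Or.inl hsb
        · refine Or.inr ⟨hsu, fun hc => ?_⟩
          rw [hc.1] at hst
          rw [hc.2] at htu
          exact hadj t ⟨hst, htu⟩
  exact { trichotomous := fun s t h1 h2 => by rcases htri s t with h | h | h; exacts [absurd h h1, h, absurd h h2], irrefl := hirr, trans := htrans }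

theorem swapPref_adjacentOne (P : Pref X) (hP : IsStrictTotalOrder X P) (a b : X)
    (hab : P a b) : AdjacentOne P (swapPref P a b) := by
  have hne : a ≠ b := fun h => hP.irrefl a (h ▸ hab)
  refine ⟨a, b, hne, hab, ?_, ?_⟩
  · rw [swapPref_iff]; exact Or.inl ⟨rfl, rfl⟩
  · intro s t hst hpair
    rw [swapPref_iff]
    constructor
    · intro h
      refine Or.inr ⟨h, fun hc => hpair ?_⟩
      rw [hc.1, hc.2]
    · rintro (⟨h1, h2⟩ | ⟨h, _⟩)
      · exfalso; apply hpair; rw [h1, h2, Set.pair_comm]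
      · exact h

/-- membership characterization for a non-conditional domain -/
theorem mem_nc_iff {B : Set (Pref X)} (hNC : NonConditional B) (P : Pref X) :
    P ∈ B ↔ IsStrictTotalOrder X P ∧ ∀ p ∈ fixedPairs B, P p.1 p.2 := by
  conv_lhs => rw [hNC]
  exact Iff.rfl

/-- finding a disagreeing pair that is adjacent in P -/
theorem find_adj_pair [Fintype X] (P R' : Pref X) (hP : IsStrictTotalOrder X P)
    (hR' : IsStrictTotalOrder X R') :
    ∀ k (a b : X), P a b → R' b a → {z | P a z ∧ P z b}.ncard = k →
    ∃ a' b', P a' b' ∧ R' b' a' ∧ ∀ z, ¬(P a' z ∧ P z b') := by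
  intro k
  induction k using Nat.strong_induction_on with
  | _ k ih =>
    intro a b hab hba hcard
    by_cases hadj : ∀ z, ¬(P a z ∧ P z b)
    · exact ⟨a, b, hab, hba, hadj⟩
    · push_neg at hadj
      obtain ⟨z, haz, hzb⟩ := hadj
      have hza : z ≠ a := fun h => hP.irrefl a (h ▸ haz)
      have hfin : ({z | P a z ∧ P z b} : Set X).Finite := Set.toFinite _
      rcases (haveI := hR'; trichotomous (r := R') z a) with h | h | h
      · -- pair (a, z), its between-set is a strict subset
        have hsub : {w | P a w ∧ P w z} ⊂ {w | P a w ∧ P w b} := by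
          constructor
          · intro w ⟨h1, h2⟩; exact ⟨h1, hP.trans _ _ _ h2 hzb⟩
          · intro hc
            have := hc ⟨haz, hzb⟩
            exact hP.irrefl z this.2
        have hlt : {w | P a w ∧ P w z}.ncard < k := by
          rw [← hcard]
          exact Set.ncard_lt_ncard hsub hfin
        exact ih _ hlt a z haz h rfl
      · exact absurd h hza
      · -- pair (z, b)
        have hbz : R' b z := hR'.trans _ _ _ hba h
        have hsub : {w | P z w ∧ P w b} ⊂ {w | P a w ∧ P w b} := by
          constructor
          · intro w ⟨h1, h2⟩; exact ⟨hP.trans _ _ _ haz h1, h2⟩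
          · intro hc
            have := hc ⟨haz, hzb⟩
            exact hP.irrefl z this.1
        have hlt : {w | P z w ∧ P w b}.ncard < k := by
          rw [← hcard]
          exact Set.ncard_lt_ncard hsub hfin
        exact ih _ hlt z b hzb hbz rfl

end Aux


theorem statement17' {X : Type*} [Fintype X]
    (B : Set (Pref X)) (hNC : NonConditional B)
    (R' : Pref X) (hR' : R' ∈ B) :
    ∀ d (P : Pref X), P ∈ B → {p : X × X | P p.1 p.2 ∧ R' p.2 p.1}.ncard = d →
    ∃ (n : ℕ) (seq : ℕ → Pref X), seq 0 = P ∧ seq n = R' ∧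
      (∀ l ≤ n, seq l ∈ B) ∧ ∀ l < n, AdjacentOne (seq l) (seq (l + 1)) := by
  have hR'sto : IsStrictTotalOrder X R' := ((mem_nc_iff hNC R').mp hR').1
  have hR'asymm : ∀ a b : X, R' a b → ¬ R' b a := fun a b h1 h2 =>
    hR'sto.irrefl a (hR'sto.trans _ _ _ h1 h2)
  intro d
  induction d using Nat.strong_induction_on with
  | _ d ih =>
    intro P hPB hcard
    have hPsto : IsStrictTotalOrder X P := ((mem_nc_iff hNC P).mp hPB).1
    rcases Nat.eq_zero_or_pos d with hd0 | hdpos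
    · -- base case: P = R'
      subst hd0
      have hempty : {p : X × X | P p.1 p.2 ∧ R' p.2 p.1} = ∅ :=
        (Set.ncard_eq_zero (Set.toFinite _)).mp hcard
      have hag : ∀ s t, P s t ↔ R' s t := by
        intro s t
        have hns : ¬ (P s t ∧ R' t s) := by
          intro h
          have : (s, t) ∈ ({p : X × X | P p.1 p.2 ∧ R' p.2 p.1} : Set (X × X)) := h
          rw [hempty] at this; exact this
        have hnt : ¬ (P t s ∧ R' s t) := by
          intro h
          have : (t, s) ∈ ({p : X × X | P p.1 p.2 ∧ R' p.2 p.1} : Set (X × X)) := h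
          rw [hempty] at this; exact this
        constructor
        · intro h
          rcases (haveI := hR'sto; trichotomous (r := R') s t) with h' | h' | h'
          · exact h'
          · exact absurd (h' ▸ h) (hPsto.irrefl s)
          · exact absurd ⟨h, h'⟩ hns
        · intro h
          rcases (haveI := hPsto; trichotomous (r := P) s t) with h' | h' | h'
          · exact h'
          · exact absurd (h' ▸ h) (hR'sto.irrefl t)
          · exact absurd ⟨h', h⟩ hnt
      have hPR : P = R' := by
        funext s t; exact propext (hag s t)
      exact ⟨0, fun _ => P, rfl, hPR, fun l _ => hPB, fun l hl => absurd hl (Nat.not_lt_zero l)⟩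
    · -- inductive step
      have hne : ({p : X × X | P p.1 p.2 ∧ R' p.2 p.1} : Set (X × X)).Nonempty := by
        apply Set.nonempty_of_ncard_ne_zero
        rw [hcard]; omega
      obtain ⟨⟨a, b⟩, hab, hba⟩ := hne
      obtain ⟨a', b', hab', hba', hadj'⟩ :=
        find_adj_pair P R' hPsto hR'sto ({z | P a z ∧ P z b}.ncard) a b hab hba rfl
      set Q := swapPref P a' b' with hQdef
      have hQsto : IsStrictTotalOrder X Q := swapPref_sto P hPsto a' b' hab' hadj'
      have hQB : Q ∈ B := by
        rw [mem_nc_iff hNC]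
        refine ⟨hQsto, fun p hp => ?_⟩
        have hPp : P p.1 p.2 := ((mem_nc_iff hNC P).mp hPB).2 p hp
        rw [hQdef, swapPref_iff]
        refine Or.inr ⟨hPp, fun hc => ?_⟩
        have hR'p : R' p.1 p.2 := hp.2 R' hR'
        rw [hc.1, hc.2] at hR'p
        exact hR'asymm b' a' hba' hR'p
      have hDQ : {p : X × X | Q p.1 p.2 ∧ R' p.2 p.1} =
          {p : X × X | P p.1 p.2 ∧ R' p.2 p.1} \ {(a', b')} := by
        ext ⟨s, t⟩
        simp only [Set.mem_setOf_eq, Set.mem_diff, Set.mem_singleton_iff, Prod.mk.injEq]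
        constructor
        · rintro ⟨hQst, hts⟩
          rw [hQdef, swapPref_iff] at hQst
          rcases hQst with ⟨h1, h2⟩ | ⟨hPst, hns⟩
          · exfalso
            rw [h1, h2] at hts
            exact hR'asymm b' a' hba' hts
          · exact ⟨⟨hPst, hts⟩, fun hc => hns ⟨hc.1, hc.2⟩⟩
        · rintro ⟨⟨hPst, hts⟩, hne'⟩
          refine ⟨?_, hts⟩
          rw [hQdef, swapPref_iff]
          exact Or.inr ⟨hPst, fun hc => hne' ⟨hc.1, hc.2⟩⟩
      have hmemab : ((a', b') : X × X) ∈ {p : X × X | P p.1 p.2 ∧ R' p.2 p.1} := ⟨hab', hba'⟩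
      have hcardQ : {p : X × X | Q p.1 p.2 ∧ R' p.2 p.1}.ncard = d - 1 := by
        rw [hDQ, Set.ncard_diff_singleton_of_mem hmemab, hcard]
      obtain ⟨n, seq', h0, hn, hmem, hadjseq⟩ := ih (d - 1) (by omega) Q hQB hcardQ
      refine ⟨n + 1, fun k => if k = 0 then P else seq' (k - 1), if_pos rfl, ?_, ?_, ?_⟩
      · simp only [Nat.succ_ne_zero, if_false, Nat.add_sub_cancel]; exact hn
      · intro l hl
        cases l with
        | zero => simpa using hPB
        | succ k =>
          simp only [Nat.succ_ne_zero, if_false, Nat.add_sub_cancel]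
          exact hmem k (by omega)
      · intro l hl
        cases l with
        | zero =>
          simp only [if_pos rfl, Nat.succ_ne_zero, if_false]
          have := swapPref_adjacentOne P hPsto a' b' hab'
          rw [← hQdef, ← h0] at this
          simpa using this
        | succ k =>
          simp only [Nat.succ_ne_zero, if_false, Nat.add_sub_cancel]
          exact hadjseq k (by omega)

theorem statement17 {X : Type*} [Fintype X]
    (B : Set (Pref X)) (hNC : NonConditional B)
    (R R' : Pref X) (hR : R ∈ B) (hR' : R' ∈ B) :
    ∃ (n : ℕ) (seq : ℕ → Pref X), seq 0 = R ∧ seq n = R' ∧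
      (∀ l ≤ n, seq l ∈ B) ∧ ∀ l < n, AdjacentOne (seq l) (seq (l + 1)) := by
  exact statement17' B hNC R' hR' _ R hR rfl
end
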